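/- Let $G$ be a graph with $e$ edges, where $\binom{m}{2} < e \le \binom{m+1}{2}$, and suppose $\Delta(G) \le \lfloor m/2 \rfloor - 1$. Then $G$ has a decomposition into matchings $H_1, \ldots, H_m$ with $e(H_i) \le e(H_{i+1}) \le e(H_i) + 1$ for all $i$; specifically, writing $t = e - \binom{m}{2}$, one has $e(H_i) = i$ for $i \le t$ and $e(H_i) = i - 1$ for $i > t$. -/

import Mathlib

open Finset

set_option linter.unusedSectionVars false

def IsMatchingEdgeSet {V : Type*} (M : Finset (Sym2 V)) : Prop :=
  (∀ e ∈ M, ¬ e.IsDiag) ∧ ∀ e ∈ M, ∀ f ∈ M, e ≠ f → ∀ v : V, ¬(v ∈ e ∧ v ∈ f)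

namespace ASD

variable {V : Type*} [Fintype V] [DecidableEq V]

lemma matching_mono {A B : Finset (Sym2 V)} (h : B ⊆ A) (hA : IsMatchingEdgeSet A) :
    IsMatchingEdgeSet B :=
  ⟨fun e he => hA.1 e (h he), fun e he f hf hef v => hA.2 e (h he) f (h hf) hef v⟩

lemma matching_unique {A : Finset (Sym2 V)} (hA : IsMatchingEdgeSet A) {e f : Sym2 V} {v : V}
    (he : e ∈ A) (hf : f ∈ A) (hv : v ∈ e) (hv' : v ∈ f) : e = f := by
  by_contra hne
  exact hA.2 e he f hf hne v ⟨hv, hv'⟩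

open Classical in
lemma matching_filter_card {A : Finset (Sym2 V)} (hA : IsMatchingEdgeSet A) (v : V) :
    (A.filter (fun e => v ∈ e)).card ≤ 1 := by
  apply Finset.card_le_one.2
  intro e he f hf
  simp only [Finset.mem_filter] at he hf
  exact matching_unique hA he.1 hf.1 he.2 hf.2

section Comp

open Classical

variable (A B : Finset (Sym2 V))

noncomputable def UG : SimpleGraph V := SimpleGraph.fromEdgeSet ↑(A ∪ B)

noncomputable def cOf (e : Sym2 V) : (UG A B).ConnectedComponent :=
  (UG A B).connectedComponentMk e.out.1

variable {A B}

lemma mem_UG_edge {e : Sym2 V} (he : e ∈ A ∪ B) (hd : ¬ e.IsDiag) :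
    e ∈ (UG A B).edgeSet := by
  rw [UG, SimpleGraph.edgeSet_fromEdgeSet]
  exact ⟨by simpa using he, hd⟩

lemma adj_UG {x y : V} (h : s(x,y) ∈ A ∪ B) (hxy : x ≠ y) : (UG A B).Adj x y := by
  rw [UG, SimpleGraph.fromEdgeSet_adj]
  exact ⟨by simpa using h, hxy⟩

lemma out_eq (e : Sym2 V) : s(e.out.1, e.out.2) = e := e.out_eq

lemma comp_eq {e : Sym2 V} (he : e ∈ A ∪ B) {v : V} (hv : v ∈ e) :
    (UG A B).connectedComponentMk v = cOf A B e := by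
  have h1 : e.out.1 ∈ e := e.out_fst_mem
  rcases eq_or_ne v e.out.1 with rfl | hne
  · rfl
  · have hv' := hv
    rw [← out_eq e] at hv'
    have h2 : v = e.out.2 := by
      rcases Sym2.mem_iff.1 hv' with h | h
      · exact absurd h hne
      · exact h
    have hadj : (UG A B).Adj v e.out.1 := by
      have heq : s(v, e.out.1) = e := by
        rw [h2, Sym2.eq_swap, out_eq]
      apply adj_UG (by rwa [heq]) hne
    exact SimpleGraph.ConnectedComponent.connectedComponentMk_eq_of_adj hadj

variable (A B) in
noncomputable def SS (κ : (UG A B).ConnectedComponent) : Finset V :=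
  Finset.univ.filter (fun v => (UG A B).connectedComponentMk v = κ)

-- the number of edges of a matching inside a component is at most half the vertices
lemma two_mul_fiber_le {C : Finset (Sym2 V)} (hA : IsMatchingEdgeSet C) (hAB : C ⊆ A ∪ B)
    (κ : (UG A B).ConnectedComponent) :
    2 * (C.filter (fun e => cOf A B e = κ)).card ≤ (SS A B κ).card := by
  classical
  set F := C.filter (fun e => cOf A B e = κ) with hF
  have hdisj : ∀ e ∈ F, ∀ f ∈ F, e ≠ f →
      Disjoint ({e.out.1, e.out.2} : Finset V) {f.out.1, f.out.2} := by
    intro e he f hf hef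
    simp only [hF, Finset.mem_filter] at he hf
    rw [Finset.disjoint_left]
    intro v hv hv'
    have hv1 : v ∈ e := by
      simp only [Finset.mem_insert, Finset.mem_singleton] at hv
      rcases hv with rfl | rfl
      · exact e.out_fst_mem
      · exact e.out_snd_mem
    have hv2 : v ∈ f := by
      simp only [Finset.mem_insert, Finset.mem_singleton] at hv'
      rcases hv' with rfl | rfl
      · exact f.out_fst_mem
      · exact f.out_snd_mem
    exact hA.2 e he.1 f hf.1 hef v ⟨hv1, hv2⟩
  have hsub : F.biUnion (fun e => ({e.out.1, e.out.2} : Finset V)) ⊆ SS A B κ := by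
    intro v hv
    simp only [Finset.mem_biUnion] at hv
    obtain ⟨e, he, hv⟩ := hv
    simp only [hF, Finset.mem_filter] at he
    have hvin : v ∈ e := by
      simp only [Finset.mem_insert, Finset.mem_singleton] at hv
      rcases hv with rfl | rfl
      · exact e.out_fst_mem
      · exact e.out_snd_mem
    simp only [SS, Finset.mem_filter, Finset.mem_univ, true_and]
    rw [comp_eq (hAB he.1) hvin, he.2]
  calc 2 * F.card = ∑ e ∈ F, 2 := by rw [Finset.sum_const]; ring
    _ = ∑ e ∈ F, ({e.out.1, e.out.2} : Finset V).card := by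
        apply Finset.sum_congr rfl
        intro e he
        simp only [hF, Finset.mem_filter] at he
        have hnd : ¬ e.IsDiag := hA.1 e he.1
        have : e.out.1 ≠ e.out.2 := by
          intro hc
          apply hnd
          rw [← out_eq e, Sym2.mk_isDiag_iff]
          exact hc
        rw [Finset.card_insert_of_notMem (by simpa using this), Finset.card_singleton]
    _ = (F.biUnion (fun e => ({e.out.1, e.out.2} : Finset V))).card :=
        (Finset.card_biUnion hdisj).symm
    _ ≤ (SS A B κ).card := Finset.card_le_card hsub

lemma comp_edge_bound (v₀ : V) (κ : (UG A B).ConnectedComponent)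
    (hv₀ : (UG A B).connectedComponentMk v₀ = κ) :
    (SS A B κ).card - 1 ≤ ((A ∪ B).filter (fun e => cOf A B e = κ)).card := by
  classical
  -- step function via shortest walks
  have hstep : ∀ v, v ∈ (SS A B κ).erase v₀ →
      ∃ w, (UG A B).Adj v w ∧ (UG A B).dist w v₀ + 1 = (UG A B).dist v v₀ := by
    intro v hv
    simp only [SS, Finset.mem_erase, Finset.mem_filter, Finset.mem_univ, true_and] at hv
    obtain ⟨hne, hκ⟩ := hv
    have hreach : (UG A B).Reachable v v₀ := by
      rw [← hv₀] at hκ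
      exact (SimpleGraph.ConnectedComponent.eq).1 hκ
    have hd0 : (UG A B).dist v v₀ ≠ 0 :=
      SimpleGraph.dist_ne_zero_iff_ne_and_reachable.2 ⟨hne, hreach⟩
    obtain ⟨p, hp⟩ := SimpleGraph.exists_walk_of_dist_ne_zero hd0
    cases p with
    | nil => simp at hd0
    | @cons _ w _ hadj q =>
      refine ⟨w, hadj, ?_⟩
      have h1 : (UG A B).dist w v₀ ≤ q.length := SimpleGraph.dist_le q
      have h2 : (UG A B).dist v v₀ ≤ (UG A B).dist w v₀ + 1 := by
        obtain ⟨r, hr⟩ := q.reachable.exists_walk_length_eq_dist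
        have := SimpleGraph.dist_le (SimpleGraph.Walk.cons hadj r)
        simpa [hr, Nat.add_comm] using this
      simp only [SimpleGraph.Walk.length_cons] at hp
      omega
  set st : V → V := fun v =>
    if h : ∃ w, (UG A B).Adj v w ∧ (UG A B).dist w v₀ + 1 = (UG A B).dist v v₀ then h.choose
    else v with hst
  have hstA : ∀ v ∈ (SS A B κ).erase v₀, (UG A B).Adj v (st v) ∧
      (UG A B).dist (st v) v₀ + 1 = (UG A B).dist v v₀ := by
    intro v hv
    have h := hstep v hv
    simp only [hst, dif_pos h]
    exact h.choose_spec
  have hcard : ((SS A B κ).erase v₀).card ≤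
      ((A ∪ B).filter (fun e => cOf A B e = κ)).card := by
    apply Finset.card_le_card_of_injOn (fun v => s(v, st v))
    · intro v hv
      obtain ⟨hadj, _⟩ := hstA v hv
      have hmem : s(v, st v) ∈ A ∪ B := by
        have h2 : s(v, st v) ∈ (UG A B).edgeSet := hadj
        rw [UG, SimpleGraph.edgeSet_fromEdgeSet] at h2
        simpa using h2.1
      simp only [Finset.mem_coe, Finset.mem_filter]
      refine ⟨hmem, ?_⟩
      have hvS : (UG A B).connectedComponentMk v = κ := by
        simp only [SS, Finset.mem_coe, Finset.mem_erase, Finset.mem_filter, Finset.mem_univ, true_and] at hv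
        exact hv.2
      rw [← comp_eq hmem (Sym2.mem_mk_left v (st v))]
      exact hvS
    · intro v hv u hu hequ
      by_contra hne
      obtain ⟨_, hdv⟩ := hstA v hv
      obtain ⟨_, hdu⟩ := hstA u hu
      rw [Sym2.eq_iff] at hequ
      rcases hequ with ⟨h1, _⟩ | ⟨h1, h2⟩
      · exact hne h1
      · rw [← h1] at hdu
        rw [h2] at hdv
        omega
  have : v₀ ∈ SS A B κ := by
    simp only [SS, Finset.mem_filter, Finset.mem_univ, true_and]; exact hv₀
  rw [Finset.card_erase_of_mem this] at hcard
  exact hcard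

lemma handshake (hA : IsMatchingEdgeSet A) (hB : IsMatchingEdgeSet B)
    (κ : (UG A B).ConnectedComponent) :
    ∑ v ∈ SS A B κ, ((A ∪ B).filter (fun e => v ∈ e)).card =
      2 * ((A ∪ B).filter (fun e => cOf A B e = κ)).card := by
  classical
  have hnd : ∀ e ∈ A ∪ B, ¬ e.IsDiag := by
    intro e he
    rcases Finset.mem_union.1 he with h | h
    · exact hA.1 e h
    · exact hB.1 e h
  have key : ∀ e ∈ A ∪ B, ((SS A B κ).filter (fun v => v ∈ e)).card =
      if cOf A B e = κ then 2 else 0 := by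
    intro e he
    by_cases hc : cOf A B e = κ
    · rw [if_pos hc]
      have : (SS A B κ).filter (fun v => v ∈ e) = {e.out.1, e.out.2} := by
        ext v
        simp only [Finset.mem_filter, SS, Finset.mem_univ, true_and,
          Finset.mem_insert, Finset.mem_singleton]
        constructor
        · rintro ⟨_, hv⟩
          have hv' := hv
          rw [← out_eq e] at hv'
          exact Sym2.mem_iff.1 hv'
        · rintro (rfl | rfl)
          · exact ⟨by rw [comp_eq he e.out_fst_mem, hc], e.out_fst_mem⟩
          · exact ⟨by rw [comp_eq he e.out_snd_mem, hc], e.out_snd_mem⟩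
      rw [this]
      have hne : e.out.1 ≠ e.out.2 := by
        intro hc'
        exact hnd e he (by rw [← out_eq e, Sym2.mk_isDiag_iff]; exact hc')
      rw [Finset.card_insert_of_notMem (by simpa using hne), Finset.card_singleton]
    · rw [if_neg hc]
      rw [Finset.card_eq_zero]
      ext v
      simp only [Finset.mem_filter, SS, Finset.mem_univ, true_and, Finset.notMem_empty,
        iff_false, not_and]
      intro hκ hv
      exact hc (by rw [← comp_eq he hv, hκ])
  calc ∑ v ∈ SS A B κ, ((A ∪ B).filter (fun e => v ∈ e)).card
      = ∑ v ∈ SS A B κ, ∑ e ∈ A ∪ B, (if v ∈ e then 1 else 0) := by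
        apply Finset.sum_congr rfl; intro v _; rw [Finset.card_filter]
    _ = ∑ e ∈ A ∪ B, ∑ v ∈ SS A B κ, (if v ∈ e then 1 else 0) := Finset.sum_comm
    _ = ∑ e ∈ A ∪ B, ((SS A B κ).filter (fun v => v ∈ e)).card := by
        apply Finset.sum_congr rfl; intro e _; rw [Finset.card_filter]
    _ = ∑ e ∈ A ∪ B, (if cOf A B e = κ then 2 else 0) := by
        apply Finset.sum_congr rfl; intro e he; rw [key e he]
    _ = 2 * ((A ∪ B).filter (fun e => cOf A B e = κ)).card := by
        rw [← Finset.sum_filter]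
        rw [Finset.sum_const]
        ring

lemma deg_le_two (hA : IsMatchingEdgeSet A) (hB : IsMatchingEdgeSet B) (v : V) :
    ((A ∪ B).filter (fun e => v ∈ e)).card ≤ 2 := by
  classical
  have h : (A ∪ B).filter (fun e => v ∈ e) ⊆
      A.filter (fun e => v ∈ e) ∪ B.filter (fun e => v ∈ e) := by
    intro e he
    simp only [Finset.mem_filter, Finset.mem_union] at he ⊢
    tauto
  calc ((A ∪ B).filter (fun e => v ∈ e)).card
      ≤ (A.filter (fun e => v ∈ e) ∪ B.filter (fun e => v ∈ e)).card := Finset.card_le_card h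
    _ ≤ (A.filter (fun e => v ∈ e)).card + (B.filter (fun e => v ∈ e)).card :=
        Finset.card_union_le _ _
    _ ≤ 2 := by
        have := matching_filter_card hA v
        have := matching_filter_card hB v
        omega

lemma three_leaves (hA : IsMatchingEdgeSet A) (hB : IsMatchingEdgeSet B)
    {x y z : V} (hxy : x ≠ y) (hxz : x ≠ z) (hyz : y ≠ z)
    (hcy : (UG A B).connectedComponentMk y = (UG A B).connectedComponentMk x)
    (hcz : (UG A B).connectedComponentMk z = (UG A B).connectedComponentMk x)
    (hdx : ((A ∪ B).filter (fun e => x ∈ e)).card ≤ 1)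
    (hdy : ((A ∪ B).filter (fun e => y ∈ e)).card ≤ 1)
    (hdz : ((A ∪ B).filter (fun e => z ∈ e)).card ≤ 1) : False := by
  classical
  set κ := (UG A B).connectedComponentMk x with hκ
  have hxS : x ∈ SS A B κ := by simp [SS, hκ]
  have hyS : y ∈ SS A B κ := by simp [SS, hcy]
  have hzS : z ∈ SS A B κ := by simp [SS, hcz]
  set T : Finset V := {x, y, z} with hT
  have hTsub : T ⊆ SS A B κ := by
    intro v hv
    simp only [hT, Finset.mem_insert, Finset.mem_singleton] at hv
    rcases hv with rfl | rfl | rfl <;> assumption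
  have hTcard : T.card = 3 := by
    rw [hT]
    rw [Finset.card_insert_of_notMem (by simp [hxy, hxz]),
      Finset.card_insert_of_notMem (by simp [hyz]), Finset.card_singleton]
  set n := (SS A B κ).card with hn
  have hn3 : 3 ≤ n := hTcard ▸ Finset.card_le_card hTsub
  have hEdge := comp_edge_bound x κ rfl
  have hHand := handshake hA hB κ
  -- upper bound on the degree sum
  have hsplit : ∑ v ∈ SS A B κ, ((A ∪ B).filter (fun e => v ∈ e)).card =
      ∑ v ∈ SS A B κ \ T, ((A ∪ B).filter (fun e => v ∈ e)).card +
      ∑ v ∈ T, ((A ∪ B).filter (fun e => v ∈ e)).card :=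
    (Finset.sum_sdiff hTsub).symm
  have h1 : ∑ v ∈ SS A B κ \ T, ((A ∪ B).filter (fun e => v ∈ e)).card ≤ 2 * (n - 3) := by
    calc ∑ v ∈ SS A B κ \ T, ((A ∪ B).filter (fun e => v ∈ e)).card
        ≤ ∑ _v ∈ SS A B κ \ T, 2 :=
          Finset.sum_le_sum (fun v _ => deg_le_two hA hB v)
      _ = 2 * (n - 3) := by
          rw [Finset.sum_const, Finset.card_sdiff_of_subset hTsub, hTcard]
          ring
  have h2 : ∑ v ∈ T, ((A ∪ B).filter (fun e => v ∈ e)).card ≤ 3 := by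
    rw [hT]
    rw [Finset.sum_insert (by simp [hxy, hxz]), Finset.sum_insert (by simp [hyz]),
      Finset.sum_singleton]
    omega
  omega

end Comp

section Swap

open Classical

variable (A B : Finset (Sym2 V))

noncomputable def sw (X Y : Finset (Sym2 V)) (κ : (UG A B).ConnectedComponent) :
    Finset (Sym2 V) :=
  X.filter (fun e => cOf A B e ≠ κ) ∪ Y.filter (fun e => cOf A B e = κ)

variable {A B}

variable {X Y : Finset (Sym2 V)} {κ : (UG A B).ConnectedComponent}

lemma mem_sw {e : Sym2 V} :
    e ∈ sw A B X Y κ ↔ (e ∈ X ∧ cOf A B e ≠ κ) ∨ (e ∈ Y ∧ cOf A B e = κ) := by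
  simp [sw, Finset.mem_union, Finset.mem_filter]

lemma sw_subset (hX : X ⊆ A ∪ B) (hY : Y ⊆ A ∪ B) : sw A B X Y κ ⊆ A ∪ B := by
  intro e he
  rcases mem_sw.1 he with h | h
  · exact hX h.1
  · exact hY h.1

lemma sw_matching (hX : IsMatchingEdgeSet X) (hY : IsMatchingEdgeSet Y)
    (hXA : X ⊆ A ∪ B) (hYA : Y ⊆ A ∪ B) : IsMatchingEdgeSet (sw A B X Y κ) := by
  constructor
  · intro e he
    rcases mem_sw.1 he with h | h
    · exact hX.1 e h.1
    · exact hY.1 e h.1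
  · intro e he f hf hef v hv
    rcases mem_sw.1 he with h | h <;> rcases mem_sw.1 hf with h' | h'
    · exact hX.2 e h.1 f h'.1 hef v hv
    · exact h.2 (by rw [← comp_eq (hXA h.1) hv.1, comp_eq (hYA h'.1) hv.2, h'.2])
    · exact h'.2 (by rw [← comp_eq (hXA h'.1) hv.2, comp_eq (hYA h.1) hv.1, h.2])
    · exact hY.2 e h.1 f h'.1 hef v hv

lemma mem_sw_of_comp {v : V} (hv : (UG A B).connectedComponentMk v = κ)
    (hXA : X ⊆ A ∪ B) (hYA : Y ⊆ A ∪ B) {e : Sym2 V} (hve : v ∈ e) :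
    e ∈ sw A B X Y κ ↔ e ∈ Y := by
  rw [mem_sw]
  constructor
  · rintro (⟨he, hc⟩ | ⟨he, _⟩)
    · exact absurd (by rw [← comp_eq (hXA he) hve, hv]) hc
    · exact he
  · intro he
    exact Or.inr ⟨he, by rw [← comp_eq (hYA he) hve, hv]⟩

lemma mem_sw_of_ncomp {v : V} (hv : (UG A B).connectedComponentMk v ≠ κ)
    (hXA : X ⊆ A ∪ B) (hYA : Y ⊆ A ∪ B) {e : Sym2 V} (hve : v ∈ e) :
    e ∈ sw A B X Y κ ↔ e ∈ X := by
  rw [mem_sw]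
  constructor
  · rintro (⟨he, _⟩ | ⟨he, hc⟩)
    · exact he
    · exact absurd (by rw [comp_eq (hYA he) hve]; exact hc) hv
  · intro he
    refine Or.inl ⟨he, ?_⟩
    intro hc
    exact hv (by rw [comp_eq (hXA he) hve]; exact hc)

lemma sw_union_eq : sw A B A B κ ∪ sw A B B A κ = A ∪ B := by
  ext e
  simp only [Finset.mem_union, mem_sw]
  by_cases h : cOf A B e = κ <;> tauto

lemma sw_disj (h : Disjoint A B) : Disjoint (sw A B A B κ) (sw A B B A κ) := by
  rw [Finset.disjoint_left]
  intro e he hf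
  rcases mem_sw.1 he with h1 | h1 <;> rcases mem_sw.1 hf with h2 | h2
  · exact Finset.disjoint_left.1 h h1.1 h2.1
  · exact h1.2 h2.2
  · exact h2.2 h1.2
  · exact Finset.disjoint_left.1 h h2.1 h1.1

lemma sw_card (hXY : Disjoint X Y) :
    (sw A B X Y κ).card =
      X.card - (X.filter (fun e => cOf A B e = κ)).card +
        (Y.filter (fun e => cOf A B e = κ)).card := by
  classical
  have hd : Disjoint (X.filter (fun e => cOf A B e ≠ κ)) (Y.filter (fun e => cOf A B e = κ)) :=
    Finset.disjoint_filter_filter hXY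
  rw [sw, Finset.card_union_of_disjoint hd]
  have := Finset.card_filter_add_card_filter_not (s := X)
    (p := fun e => cOf A B e = κ)
  have h2 : (X.filter (fun e => ¬ cOf A B e = κ)).card
      = X.card - (X.filter (fun e => cOf A B e = κ)).card := by omega
  simp only [ne_eq]
  rw [h2]

lemma alternation (hA : IsMatchingEdgeSet A) (hB : IsMatchingEdgeSet B)
    (κ : (UG A B).ConnectedComponent) :
    (A.filter (fun e => cOf A B e = κ)).card ≤ (B.filter (fun e => cOf A B e = κ)).card + 1 := by
  classical
  by_cases ha : (A.filter (fun e => cOf A B e = κ)).card = 0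
  · omega
  · obtain ⟨e₀, he₀⟩ := Finset.card_pos.1 (Nat.pos_of_ne_zero ha)
    simp only [Finset.mem_filter] at he₀
    have hv₀ : (UG A B).connectedComponentMk e₀.out.1 = κ := by
      rw [comp_eq (Finset.mem_union_left B he₀.1) e₀.out_fst_mem, he₀.2]
    have hbound := comp_edge_bound e₀.out.1 κ hv₀
    have h2a := two_mul_fiber_le (C := A) hA Finset.subset_union_left κ
    have h2b := two_mul_fiber_le (C := B) hB Finset.subset_union_right κ
    have hsplit : ((A ∪ B).filter (fun e => cOf A B e = κ)).card ≤
        (A.filter (fun e => cOf A B e = κ)).card +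
        (B.filter (fun e => cOf A B e = κ)).card := by
      rw [Finset.filter_union]
      exact Finset.card_union_le _ _
    omega

lemma pigeonhole (h : B.card < A.card) :
    ∃ κ : (UG A B).ConnectedComponent,
      (B.filter (fun e => cOf A B e = κ)).card < (A.filter (fun e => cOf A B e = κ)).card := by
  classical
  set T := (A ∪ B).image (cOf A B) with hT
  have hAc : A.card = ∑ κ ∈ T, (A.filter (fun e => cOf A B e = κ)).card := by
    apply Finset.card_eq_sum_card_fiberwise
    intro e he
    exact Finset.mem_image_of_mem _ (Finset.mem_union_left B he)
  have hBc : B.card = ∑ κ ∈ T, (B.filter (fun e => cOf A B e = κ)).card := by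
    apply Finset.card_eq_sum_card_fiberwise
    intro e he
    exact Finset.mem_image_of_mem _ (Finset.mem_union_right A he)
  by_contra hc
  push_neg at hc
  have : A.card ≤ B.card := by
    rw [hAc, hBc]
    exact Finset.sum_le_sum (fun κ _ => hc κ)
  omega

lemma rh_step (hA : IsMatchingEdgeSet A) (hB : IsMatchingEdgeSet B) (hdisj : Disjoint A B)
    (h : B.card < A.card) :
    ∃ A' B' : Finset (Sym2 V), IsMatchingEdgeSet A' ∧ IsMatchingEdgeSet B' ∧
      Disjoint A' B' ∧ A' ∪ B' = A ∪ B ∧ A'.card + 1 = A.card ∧ B'.card = B.card + 1 := by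
  classical
  obtain ⟨κ, hκ⟩ := pigeonhole h
  have halt := alternation hA hB κ
  have haeq : (A.filter (fun e => cOf A B e = κ)).card =
      (B.filter (fun e => cOf A B e = κ)).card + 1 := by omega
  have haA : (A.filter (fun e => cOf A B e = κ)).card ≤ A.card :=
    Finset.card_le_card (Finset.filter_subset _ _)
  have hbB : (B.filter (fun e => cOf A B e = κ)).card ≤ B.card :=
    Finset.card_le_card (Finset.filter_subset _ _)
  refine ⟨sw A B A B κ, sw A B B A κ,
    sw_matching hA hB Finset.subset_union_left Finset.subset_union_right,
    sw_matching hB hA Finset.subset_union_right Finset.subset_union_left,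
    sw_disj hdisj, sw_union_eq, ?_, ?_⟩
  · rw [sw_card hdisj]
    omega
  · rw [sw_card hdisj.symm]
    omega

end Swap


section Equalize

open Classical

lemma equalize (k : ℕ) (E : Finset (Sym2 V)) (v : ℕ → ℕ)
    (hsum : ∑ i ∈ Finset.range k, v i = E.card)
    (hv : ∀ i ∈ Finset.range k, ∀ j ∈ Finset.range k, v i ≤ v j + 1) :
    ∀ (D : ℕ → Finset (Sym2 V)), (∀ i, IsMatchingEdgeSet (D i)) →
    (∀ i j, i ≠ j → Disjoint (D i) (D j)) → (∀ i, k ≤ i → D i = ∅) →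
    ((Finset.range k).biUnion D = E) →
    ∃ D' : ℕ → Finset (Sym2 V), (∀ i, IsMatchingEdgeSet (D' i)) ∧
      (∀ i j, i ≠ j → Disjoint (D' i) (D' j)) ∧ (∀ i, k ≤ i → D' i = ∅) ∧
      ((Finset.range k).biUnion D' = E) ∧ (∀ i ∈ Finset.range k, (D' i).card = v i) := by
  classical
  suffices H : ∀ N (D : ℕ → Finset (Sym2 V)), (∀ i, IsMatchingEdgeSet (D i)) →
      (∀ i j, i ≠ j → Disjoint (D i) (D j)) → (∀ i, k ≤ i → D i = ∅) →
      ((Finset.range k).biUnion D = E) →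
      (∑ i ∈ Finset.range k, ((D i).card - v i + (v i - (D i).card))) ≤ N →
      ∃ D' : ℕ → Finset (Sym2 V), (∀ i, IsMatchingEdgeSet (D' i)) ∧
        (∀ i j, i ≠ j → Disjoint (D' i) (D' j)) ∧ (∀ i, k ≤ i → D' i = ∅) ∧
        ((Finset.range k).biUnion D' = E) ∧ (∀ i ∈ Finset.range k, (D' i).card = v i) by
    intro D h1 h2 h3 h4
    exact H _ D h1 h2 h3 h4 le_rfl
  intro N
  induction N with
  | zero =>
    intro D h1 h2 h3 h4 hN
    refine ⟨D, h1, h2, h3, h4, ?_⟩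
    intro i hi
    have := Finset.sum_eq_zero_iff.1 (Nat.le_zero.1 hN) i hi
    omega
  | succ N ih =>
    intro D h1 h2 h3 h4 hN
    by_cases hdone : ∀ i ∈ Finset.range k, (D i).card = v i
    · exact ⟨D, h1, h2, h3, h4, hdone⟩
    · push_neg at hdone
      obtain ⟨i₁, hi₁, hne₁⟩ := hdone
      have hsumD : ∑ i ∈ Finset.range k, (D i).card = E.card := by
        rw [← h4]
        exact (Finset.card_biUnion (fun i hi j hj hij => h2 i j hij)).symm
      -- find i with card > v i and j with card < v j
      have hex : (∃ i ∈ Finset.range k, v i < (D i).card) ∧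
          (∃ j ∈ Finset.range k, (D j).card < v j) := by
        constructor
        · by_contra hc
          push_neg at hc
          have hlt : ∑ i ∈ Finset.range k, (D i).card < ∑ i ∈ Finset.range k, v i := by
            apply Finset.sum_lt_sum hc
            exact ⟨i₁, hi₁, by
              have := hc i₁ hi₁
              omega⟩
          omega
        · by_contra hc
          push_neg at hc
          have hlt : ∑ i ∈ Finset.range k, v i < ∑ i ∈ Finset.range k, (D i).card := by
            apply Finset.sum_lt_sum hc
            exact ⟨i₁, hi₁, by
              have := hc i₁ hi₁
              omega⟩
          omega
      obtain ⟨⟨i, hi, hilt⟩, ⟨j, hj, hjlt⟩⟩ := hex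
      have hij : i ≠ j := by
        intro h
        subst h
        omega
      have hcard : (D j).card < (D i).card := by
        have := hv j hj i hi
        omega
      obtain ⟨A', B', hA'm, hB'm, hAB'd, hAB'u, hA'c, hB'c⟩ :=
        rh_step (h1 i) (h1 j) (h2 i j hij) hcard
      set D'' : ℕ → Finset (Sym2 V) := fun l => if l = i then A' else if l = j then B' else D l
        with hD''
      have hsubij : ∀ l, D'' l ⊆ D l ∪ (D i ∪ D j) := by
        intro l e he
        simp only [hD''] at he
        split_ifs at he with h' h''
        · subst h'
          exact Finset.mem_union_right _ (by rw [← hAB'u]; exact Finset.mem_union_left _ he)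
        · subst h''
          exact Finset.mem_union_right _ (by rw [← hAB'u]; exact Finset.mem_union_right _ he)
        · exact Finset.mem_union_left _ he
      have hm'' : ∀ l, IsMatchingEdgeSet (D'' l) := by
        intro l
        simp only [hD'']
        split_ifs with h' h''
        · exact hA'm
        · exact hB'm
        · exact h1 l
      have hmem'' : ∀ p e, e ∈ D'' p →
          (p = i ∧ e ∈ A') ∨ (p = j ∧ e ∈ B') ∨ (p ≠ i ∧ p ≠ j ∧ e ∈ D p) := by
        intro p e he
        simp only [hD''] at he
        split_ifs at he with h' h''
        · exact Or.inl ⟨h', he⟩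
        · exact Or.inr (Or.inl ⟨h'', he⟩)
        · exact Or.inr (Or.inr ⟨h', h'', he⟩)
      have hABmem : ∀ e, e ∈ A' ∪ B' → e ∈ D i ∨ e ∈ D j := by
        intro e he; rw [hAB'u] at he; exact Finset.mem_union.1 he
      have hd'' : ∀ p q, p ≠ q → Disjoint (D'' p) (D'' q) := by
        intro p q hpq
        rw [Finset.disjoint_left]
        intro e hep heq
        rcases hmem'' p e hep with ⟨hp, he1⟩ | ⟨hp, he1⟩ | ⟨hp1, hp2, he1⟩ <;>
          rcases hmem'' q e heq with ⟨hq, he2⟩ | ⟨hq, he2⟩ | ⟨hq1, hq2, he2⟩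
        · exact hpq (hp.trans hq.symm)
        · exact Finset.disjoint_left.1 hAB'd he1 he2
        · rcases hABmem e (Finset.mem_union_left _ he1) with h | h
          · exact Finset.disjoint_left.1 (h2 i q (Ne.symm hq1)) h he2
          · exact Finset.disjoint_left.1 (h2 j q (Ne.symm hq2)) h he2
        · exact Finset.disjoint_left.1 hAB'd he2 he1
        · exact hpq (hp.trans hq.symm)
        · rcases hABmem e (Finset.mem_union_right _ he1) with h | h
          · exact Finset.disjoint_left.1 (h2 i q (Ne.symm hq1)) h he2
          · exact Finset.disjoint_left.1 (h2 j q (Ne.symm hq2)) h he2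
        · rcases hABmem e (Finset.mem_union_left _ he2) with h | h
          · exact Finset.disjoint_left.1 (h2 i p (Ne.symm hp1)) h he1
          · exact Finset.disjoint_left.1 (h2 j p (Ne.symm hp2)) h he1
        · rcases hABmem e (Finset.mem_union_right _ he2) with h | h
          · exact Finset.disjoint_left.1 (h2 i p (Ne.symm hp1)) h he1
          · exact Finset.disjoint_left.1 (h2 j p (Ne.symm hp2)) h he1
        · exact Finset.disjoint_left.1 (h2 p q hpq) he1 he2
      have he'' : ∀ l, k ≤ l → D'' l = ∅ := by
        intro l hl
        have hli : l ≠ i := by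
          intro h; subst h; simp only [Finset.mem_range] at hi; omega
        have hlj : l ≠ j := by
          intro h; subst h; simp only [Finset.mem_range] at hj; omega
        simp only [hD'', if_neg hli, if_neg hlj]
        exact h3 l hl
      have hc'' : (Finset.range k).biUnion D'' = E := by
        rw [← h4]
        ext e
        simp only [Finset.mem_biUnion]
        constructor
        · rintro ⟨l, hl, he⟩
          simp only [hD''] at he
          split_ifs at he with h' h''
          · have : e ∈ D i ∪ D j := by rw [← hAB'u]; exact Finset.mem_union_left _ he
            rcases Finset.mem_union.1 this with h | h
            · exact ⟨i, hi, h⟩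
            · exact ⟨j, hj, h⟩
          · have : e ∈ D i ∪ D j := by rw [← hAB'u]; exact Finset.mem_union_right _ he
            rcases Finset.mem_union.1 this with h | h
            · exact ⟨i, hi, h⟩
            · exact ⟨j, hj, h⟩
          · exact ⟨l, hl, he⟩
        · rintro ⟨l, hl, he⟩
          rcases eq_or_ne l i with rfl | hl1
          · have : e ∈ A' ∪ B' := by rw [hAB'u]; exact Finset.mem_union_left _ he
            rcases Finset.mem_union.1 this with h | h
            · exact ⟨l, hl, by simp [hD'', h]⟩
            · exact ⟨j, hj, by simp [hD'', hij.symm, h]⟩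
          · rcases eq_or_ne l j with rfl | hl2
            · have : e ∈ A' ∪ B' := by rw [hAB'u]; exact Finset.mem_union_right _ he
              rcases Finset.mem_union.1 this with h | h
              · exact ⟨i, hi, by simp [hD'', h]⟩
              · exact ⟨l, hl, by simp [hD'', hl1, h]⟩
            · exact ⟨l, hl, by simp [hD'', hl1, hl2, he]⟩
      have hΦ : (∑ l ∈ Finset.range k, ((D'' l).card - v l + (v l - (D'' l).card))) < 
          (∑ l ∈ Finset.range k, ((D l).card - v l + (v l - (D l).card))) := by
        apply Finset.sum_lt_sum
        · intro l hl
          simp only [hD'']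
          split_ifs with h' h''
          · subst h'; omega
          · subst h''; omega
          · omega
        · refine ⟨i, hi, ?_⟩
          simp only [hD'', if_pos rfl]
          omega
      exact ih D'' hm'' hd'' he'' hc'' (by omega)

lemma split_sizes (a : ℕ → ℕ) (J : Finset ℕ) :
    ∀ (S : Finset (Sym2 V)), S.card = ∑ j ∈ J, a j →
    ∃ f : ℕ → Finset (Sym2 V), (∀ j ∈ J, f j ⊆ S) ∧ (∀ j ∈ J, (f j).card = a j) ∧
      (∀ i ∈ J, ∀ j ∈ J, i ≠ j → Disjoint (f i) (f j)) ∧ J.biUnion f = S := by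
  classical
  induction J using Finset.induction_on with
  | empty =>
    intro S hS
    refine ⟨fun _ => ∅, by simp, by simp, by simp, ?_⟩
    simp only [Finset.biUnion_empty]
    symm
    rw [← Finset.card_eq_zero]
    simpa using hS
  | @insert j₀ J hj₀ ih =>
    intro S hS
    rw [Finset.sum_insert hj₀] at hS
    have hle : a j₀ ≤ S.card := by omega
    obtain ⟨T, hTS, hTc⟩ := Finset.exists_subset_card_eq hle
    have hS' : (S \ T).card = ∑ j ∈ J, a j := by
      rw [Finset.card_sdiff_of_subset hTS, hTc]
      omega
    obtain ⟨f', hf'1, hf'2, hf'3, hf'4⟩ := ih (S \ T) hS'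
    set f : ℕ → Finset (Sym2 V) := fun j => if j = j₀ then T else f' j with hf
    have hfj : ∀ j ∈ J, f j = f' j := by
      intro j hj
      have : j ≠ j₀ := by rintro rfl; exact hj₀ hj
      simp only [hf, if_neg this]
    refine ⟨f, ?_, ?_, ?_, ?_⟩
    · intro j hj
      rcases Finset.mem_insert.1 hj with rfl | hj'
      · simp only [hf, if_pos rfl]; exact hTS
      · rw [hfj j hj']
        exact (hf'1 j hj').trans (Finset.sdiff_subset)
    · intro j hj
      rcases Finset.mem_insert.1 hj with rfl | hj'
      · simp only [hf, if_pos rfl]; exact hTc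
      · rw [hfj j hj']; exact hf'2 j hj'
    · intro i hi j hj hij
      rcases Finset.mem_insert.1 hi with rfl | hi' <;> rcases Finset.mem_insert.1 hj with rfl | hj'
      · omega
      · rw [hfj j hj']
        have h1 : f i = T := by simp [hf]
        rw [h1]
        exact Finset.disjoint_of_subset_right (hf'1 j hj') Finset.disjoint_sdiff
      · rw [hfj i hi']
        simp only [hf, if_pos rfl]
        exact Finset.disjoint_of_subset_left (hf'1 i hi') Finset.sdiff_disjoint
      · rw [hfj i hi', hfj j hj']
        exact hf'3 i hi' j hj' hij
    · rw [Finset.biUnion_insert]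
      have : J.biUnion f = J.biUnion f' := Finset.biUnion_congr rfl hfj
      rw [this, hf'4]
      simp only [hf, if_pos rfl]
      rw [Finset.union_sdiff_of_subset hTS]

lemma assemble (E : Finset (Sym2 V)) (k m : ℕ) (a g : ℕ → ℕ)
    (hgk : ∀ j ∈ Finset.Icc 1 m, g j < k)
    (D : ℕ → Finset (Sym2 V)) (hDm : ∀ i, IsMatchingEdgeSet (D i))
    (hDd : ∀ i j, i ≠ j → Disjoint (D i) (D j))
    (hDe : ∀ i, k ≤ i → D i = ∅)
    (hDc : (Finset.range k).biUnion D = E)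
    (hbal : ∀ c ∈ Finset.range k, ∀ c' ∈ Finset.range k,
      (∑ j ∈ (Finset.Icc 1 m).filter (fun j => g j = c), a j) ≤
      (∑ j ∈ (Finset.Icc 1 m).filter (fun j => g j = c'), a j) + 1)
    (hsum : ∑ j ∈ Finset.Icc 1 m, a j = E.card) :
    ∃ H : ℕ → Finset (Sym2 V),
      (∀ i ∈ Finset.Icc 1 m, H i ⊆ E) ∧
      (∀ i ∈ Finset.Icc 1 m, IsMatchingEdgeSet (H i)) ∧
      (∀ i ∈ Finset.Icc 1 m, ∀ j ∈ Finset.Icc 1 m, i ≠ j → Disjoint (H i) (H j)) ∧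
      (Finset.Icc 1 m).biUnion H = E ∧ (∀ i ∈ Finset.Icc 1 m, (H i).card = a i) := by
  classical
  set v : ℕ → ℕ := fun c => ∑ j ∈ (Finset.Icc 1 m).filter (fun j => g j = c), a j with hv
  have hsumv : ∑ c ∈ Finset.range k, v c = E.card := by
    rw [hv, ← hsum]
    apply Finset.sum_fiberwise_of_maps_to
    intro j hj
    exact Finset.mem_range.2 (hgk j hj)
  obtain ⟨D', hD'm, hD'd, hD'e, hD'c, hD'card⟩ :=
    equalize k E v hsumv (fun c hc c' hc' => hbal c hc c' hc') D hDm hDd hDe hDc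
  have hD'sub : ∀ c ∈ Finset.range k, D' c ⊆ E := by
    intro c hc
    rw [← hD'c]
    exact Finset.subset_biUnion_of_mem D' hc
  have hsplit : ∀ c, ∃ f : ℕ → Finset (Sym2 V), c ∈ Finset.range k →
      ((∀ j ∈ (Finset.Icc 1 m).filter (fun j => g j = c), f j ⊆ D' c) ∧
       (∀ j ∈ (Finset.Icc 1 m).filter (fun j => g j = c), (f j).card = a j) ∧
       (∀ i ∈ (Finset.Icc 1 m).filter (fun j => g j = c),
         ∀ j ∈ (Finset.Icc 1 m).filter (fun j => g j = c), i ≠ j → Disjoint (f i) (f j)) ∧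
       ((Finset.Icc 1 m).filter (fun j => g j = c)).biUnion f = D' c) := by
    intro c
    by_cases hc : c ∈ Finset.range k
    · obtain ⟨f, h1, h2, h3, h4⟩ := split_sizes a ((Finset.Icc 1 m).filter (fun j => g j = c))
        (D' c) (hD'card c hc)
      exact ⟨f, fun _ => ⟨h1, h2, h3, h4⟩⟩
    · exact ⟨fun _ => ∅, fun h => absurd h hc⟩
  choose F hF using hsplit
  set H : ℕ → Finset (Sym2 V) := fun j => F (g j) j with hH
  have hgmem : ∀ j ∈ Finset.Icc 1 m, j ∈ (Finset.Icc 1 m).filter (fun i => g i = g j) := by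
    intro j hj
    simp [hj]
  have hHsub : ∀ j ∈ Finset.Icc 1 m, H j ⊆ D' (g j) := by
    intro j hj
    exact (hF (g j) (Finset.mem_range.2 (hgk j hj))).1 j (hgmem j hj)
  refine ⟨H, ?_, ?_, ?_, ?_, ?_⟩
  · intro j hj
    exact (hHsub j hj).trans (hD'sub (g j) (Finset.mem_range.2 (hgk j hj)))
  · intro j hj
    exact matching_mono (hHsub j hj) (hD'm (g j))
  · intro i hi j hj hij
    rcases eq_or_ne (g i) (g j) with hg | hg
    · have := (hF (g i) (Finset.mem_range.2 (hgk i hi))).2.2.1 i (hgmem i hi) j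
        (by rw [hg]; exact hgmem j hj) hij
      simpa [hH, hg] using this
    · exact Finset.disjoint_of_subset_left (hHsub i hi)
        (Finset.disjoint_of_subset_right (hHsub j hj) (hD'd (g i) (g j) hg))
  · ext e
    simp only [Finset.mem_biUnion]
    constructor
    · rintro ⟨j, hj, he⟩
      exact (hHsub j hj).trans (hD'sub (g j) (Finset.mem_range.2 (hgk j hj))) he
    · intro he
      rw [← hD'c] at he
      obtain ⟨c, hc, hec⟩ := Finset.mem_biUnion.1 he
      rw [← (hF c hc).2.2.2] at hec
      obtain ⟨j, hjf, hej⟩ := Finset.mem_biUnion.1 hec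
      simp only [Finset.mem_filter] at hjf
      exact ⟨j, hjf.1, by rw [hH]; simp only; rw [hjf.2]; exact hej⟩
  · intro j hj
    exact (hF (g j) (Finset.mem_range.2 (hgk j hj))).2.1 j (hgmem j hj)

end Equalize

section Arith

open Classical

lemma case_even (k t m : ℕ) (hm : m = 2*k) (hk : 2 ≤ k) (ht1 : 1 ≤ t) (ht2 : t ≤ m) :
    ∃ g : ℕ → ℕ, (∀ j ∈ Finset.Icc 1 m, g j < k) ∧ ∀ c ∈ Finset.range k, ∀ c' ∈ Finset.range k,
      (∑ j ∈ (Finset.Icc 1 m).filter (fun j => g j = c), (if j ≤ t then j else j - 1)) ≤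
      (∑ j ∈ (Finset.Icc 1 m).filter (fun j => g j = c'), (if j ≤ t then j else j - 1)) + 1 := by
  classical
  refine ⟨fun j => if j ≤ k then j - 1 else m - j, ?_, ?_⟩
  · intro j hj
    simp only [Finset.mem_Icc] at hj
    dsimp only
    split_ifs <;> omega
  · have hfib : ∀ c ∈ Finset.range k,
        (Finset.Icc 1 m).filter (fun j => (if j ≤ k then j - 1 else m - j) = c) =
          ({c + 1, m - c} : Finset ℕ) := by
      intro c hc
      simp only [Finset.mem_range] at hc
      ext j
      simp only [Finset.mem_filter, Finset.mem_Icc, Finset.mem_insert, Finset.mem_singleton]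
      split_ifs with h <;> omega
    intro c hc c' hc'
    rw [hfib c hc, hfib c' hc']
    have h1 : c + 1 ≠ m - c := by simp only [Finset.mem_range] at hc; omega
    have h2 : c' + 1 ≠ m - c' := by simp only [Finset.mem_range] at hc'; omega
    rw [Finset.sum_pair h1, Finset.sum_pair h2]
    simp only [Finset.mem_range] at hc hc'
    split_ifs <;> omega

lemma case_odd (k t m : ℕ) (hm : m = 2*k+1) (hk : 2 ≤ k) (ht1 : 1 ≤ t) (ht2 : t ≤ m) :
    ∃ g : ℕ → ℕ, (∀ j ∈ Finset.Icc 1 m, g j < k) ∧ ∀ c ∈ Finset.range k, ∀ c' ∈ Finset.range k,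
      (∑ j ∈ (Finset.Icc 1 m).filter (fun j => g j = c), (if j ≤ t then j else j - 1)) ≤
      (∑ j ∈ (Finset.Icc 1 m).filter (fun j => g j = c'), (if j ≤ t then j else j - 1)) + 1 := by
  classical
  by_cases htk : t ≤ k
  · -- small t
    refine ⟨fun j => if j = 1 ∨ j = k+1 ∨ j = k+2 then k-1 else if j ≤ k then j - 2 else m - j,
      ?_, ?_⟩
    · intro j hj
      simp only [Finset.mem_Icc] at hj
      dsimp only
      split_ifs <;> omega
    · have hfib : ∀ c ∈ Finset.range k,
          (Finset.Icc 1 m).filter (fun j =>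
            (if j = 1 ∨ j = k+1 ∨ j = k+2 then k-1 else if j ≤ k then j - 2 else m - j) = c) =
          (if c = k - 1 then ({1, k+1, k+2} : Finset ℕ) else ({c + 2, m - c} : Finset ℕ)) := by
        intro c hc
        simp only [Finset.mem_range] at hc
        rcases eq_or_ne c (k-1) with rfl | hck
        · rw [if_pos rfl]
          ext j
          simp only [Finset.mem_filter, Finset.mem_Icc, Finset.mem_insert, Finset.mem_singleton]
          split_ifs <;> omega
        · rw [if_neg hck]
          ext j
          simp only [Finset.mem_filter, Finset.mem_Icc, Finset.mem_insert, Finset.mem_singleton]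
          split_ifs <;> omega
      intro c hc c' hc'
      rw [hfib c hc, hfib c' hc']
      simp only [Finset.mem_range] at hc hc'
      have hsum3 : ∑ j ∈ ({1, k+1, k+2} : Finset ℕ), (if j ≤ t then j else j - 1) = 2*k + 2 := by
        rw [Finset.sum_insert (by simp only [Finset.mem_insert, Finset.mem_singleton]; omega),
          Finset.sum_insert (by simp only [Finset.mem_singleton]; omega),
          Finset.sum_singleton]
        split_ifs <;> omega
      have hsum2 : ∀ c, c < k → c ≠ k - 1 →
          ∑ j ∈ ({c + 2, m - c} : Finset ℕ), (if j ≤ t then j else j - 1) =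
            (if c + 2 ≤ t then c + 2 else c + 1) + (m - c - 1) := by
        intro c hck hcne
        rw [Finset.sum_pair (by omega)]
        split_ifs <;> omega
      by_cases hck : c = k - 1 <;> by_cases hck' : c' = k - 1
      · rw [if_pos hck, if_pos hck']
        omega
      · rw [if_pos hck, if_neg hck', hsum3, hsum2 c' hc' hck']
        split_ifs <;> omega
      · rw [if_neg hck, if_pos hck', hsum3, hsum2 c hc hck]
        split_ifs <;> omega
      · rw [if_neg hck, if_neg hck', hsum2 c hc hck, hsum2 c' hc' hck']
        split_ifs <;> omega
  · -- large t
    refine ⟨fun j => if j ≤ 2 ∨ j = m then k-1 else if j ≤ k+1 then j - 3 else m - 1 - j,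
      ?_, ?_⟩
    · intro j hj
      simp only [Finset.mem_Icc] at hj
      dsimp only
      split_ifs <;> omega
    · have hfib : ∀ c ∈ Finset.range k,
          (Finset.Icc 1 m).filter (fun j =>
            (if j ≤ 2 ∨ j = m then k-1 else if j ≤ k+1 then j - 3 else m - 1 - j) = c) =
          (if c = k - 1 then ({1, 2, m} : Finset ℕ) else ({c + 3, m - 1 - c} : Finset ℕ)) := by
        intro c hc
        simp only [Finset.mem_range] at hc
        rcases eq_or_ne c (k-1) with rfl | hck
        · rw [if_pos rfl]
          ext j
          simp only [Finset.mem_filter, Finset.mem_Icc, Finset.mem_insert, Finset.mem_singleton]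
          split_ifs <;> omega
        · rw [if_neg hck]
          ext j
          simp only [Finset.mem_filter, Finset.mem_Icc, Finset.mem_insert, Finset.mem_singleton]
          split_ifs <;> omega
      intro c hc c' hc'
      rw [hfib c hc, hfib c' hc']
      simp only [Finset.mem_range] at hc hc'
      have hsum3 : ∑ j ∈ ({1, 2, m} : Finset ℕ), (if j ≤ t then j else j - 1) =
          (if m ≤ t then m + 3 else m + 2) := by
        rw [Finset.sum_insert (by simp only [Finset.mem_insert, Finset.mem_singleton]; omega),
          Finset.sum_insert (by simp only [Finset.mem_singleton]; omega),
          Finset.sum_singleton]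
        split_ifs <;> omega
      have hsum2 : ∀ c, c < k → c ≠ k - 1 →
          ∑ j ∈ ({c + 3, m - 1 - c} : Finset ℕ), (if j ≤ t then j else j - 1) =
            (c + 3) + (if m - 1 - c ≤ t then m - 1 - c else m - 2 - c) := by
        intro c hck hcne
        rw [Finset.sum_pair (by omega)]
        split_ifs <;> omega
      by_cases hck : c = k - 1 <;> by_cases hck' : c' = k - 1
      · rw [if_pos hck, if_pos hck']
        omega
      · rw [if_pos hck, if_neg hck', hsum3, hsum2 c' hc' hck']
        split_ifs <;> omega
      · rw [if_neg hck, if_pos hck', hsum3, hsum2 c hc hck]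
        split_ifs <;> omega
      · rw [if_neg hck, if_neg hck', hsum2 c hc hck, hsum2 c' hc' hck']
        split_ifs <;> omega

end Arith

section Vizing

open Classical

variable (G : SimpleGraph V) [DecidableRel G.Adj] (k : ℕ)

structure PC (E₀ : Finset (Sym2 V)) : Type _ where
  C : ℕ → Finset (Sym2 V)
  sub : ∀ i, C i ⊆ G.edgeFinset
  mtch : ∀ i, IsMatchingEdgeSet (C i)
  hemp : ∀ i, k ≤ i → C i = ∅
  disj : ∀ i j, i ≠ j → Disjoint (C i) (C j)
  cover : ∀ e, e ∈ E₀ ↔ ∃ i, e ∈ C i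

variable {G k}

variable {E₀ : Finset (Sym2 V)}

def PC.free (P : PC G k E₀) (γ : ℕ) (v : V) : Prop := ∀ e ∈ P.C γ, v ∉ e

lemma PC.mem_of_mem_C (P : PC G k E₀) {e : Sym2 V} {i : ℕ} (he : e ∈ P.C i) : e ∈ E₀ :=
  (P.cover e).2 ⟨i, he⟩

lemma PC.unique_class (P : PC G k E₀) {e : Sym2 V} {i j : ℕ} (hi : e ∈ P.C i) (hj : e ∈ P.C j) :
    i = j := by
  by_contra hne
  exact Finset.disjoint_left.1 (P.disj i j hne) hi hj

lemma PC.free_exists (P : PC G k E₀) (hk : 1 ≤ k) (v : V) (hdeg : G.degree v ≤ k - 1) :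
    ∃ γ, γ < k ∧ P.free γ v := by
  classical
  set U := (Finset.range k).filter (fun γ => ¬ P.free γ v) with hU
  set w : ℕ → Sym2 V := fun γ =>
    if h : ∃ e, e ∈ P.C γ ∧ v ∈ e then h.choose else s(v,v) with hw
  have hwmem : ∀ γ ∈ U, w γ ∈ P.C γ ∧ v ∈ w γ := by
    intro γ hγ
    rw [hU, Finset.mem_filter] at hγ
    simp only [PC.free] at hγ
    push_neg at hγ
    obtain ⟨e, he, hv⟩ := hγ.2
    have h : ∃ e, e ∈ P.C γ ∧ v ∈ e := ⟨e, he, hv⟩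
    simp only [hw, dif_pos h]
    exact h.choose_spec
  have hcard : U.card ≤ k - 1 := by
    have hinj : Set.InjOn w U := by
      intro γ hγ γ' hγ' heq
      exact P.unique_class (hwmem γ hγ).1 (heq ▸ (hwmem γ' hγ').1)
    have hmaps : ∀ γ ∈ U, w γ ∈ G.incidenceFinset v := by
      intro γ hγ
      rw [SimpleGraph.incidenceFinset_eq_filter, Finset.mem_filter]
      exact ⟨P.sub γ (hwmem γ hγ).1, (hwmem γ hγ).2⟩
    calc U.card ≤ (G.incidenceFinset v).card := Finset.card_le_card_of_injOn w hmaps hinj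
      _ = G.degree v := SimpleGraph.card_incidenceFinset_eq_degree G v
      _ ≤ k - 1 := hdeg
  have : ∃ γ ∈ Finset.range k, γ ∉ U := by
    by_contra hc
    push_neg at hc
    have : Finset.range k ⊆ U := hc
    have := Finset.card_le_card this
    rw [Finset.card_range] at this
    omega
  obtain ⟨γ, hγ, hγU⟩ := this
  refine ⟨γ, Finset.mem_range.1 hγ, ?_⟩
  by_contra hfree
  exact hγU (by simp only [hU, Finset.mem_filter]; exact ⟨hγ, hfree⟩)

def updC (Cl : ℕ → Finset (Sym2 V)) (γ : ℕ) (S : Finset (Sym2 V)) : ℕ → Finset (Sym2 V) :=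
  fun δ => if δ = γ then S else Cl δ

lemma updC_same (Cl : ℕ → Finset (Sym2 V)) (γ : ℕ) (S : Finset (Sym2 V)) :
    updC Cl γ S γ = S := if_pos rfl

lemma updC_other (Cl : ℕ → Finset (Sym2 V)) (γ : ℕ) (S : Finset (Sym2 V)) {δ : ℕ}
    (h : δ ≠ γ) : updC Cl γ S δ = Cl δ := if_neg h

lemma mem_updC {Cl : ℕ → Finset (Sym2 V)} {γ : ℕ} {S : Finset (Sym2 V)} {δ : ℕ}
    {x : Sym2 V} : x ∈ updC Cl γ S δ ↔ (δ = γ ∧ x ∈ S) ∨ (δ ≠ γ ∧ x ∈ Cl δ) := by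
  unfold updC
  by_cases h : δ = γ
  · simp [h]
  · simp [h]

/-- Insert an uncoloured edge into class `γ`. -/
noncomputable def PC.insertEdge (P : PC G k E₀) (γ : ℕ) (f : Sym2 V)
    (hγ : γ < k) (hf : f ∈ G.edgeFinset) (hfE : f ∉ E₀) (hfree : ∀ v ∈ f, P.free γ v) :
    PC G k (insert f E₀) where
  C := updC P.C γ (insert f (P.C γ))
  sub := by
    intro i e he
    rcases mem_updC.1 he with ⟨h, he⟩ | ⟨h, he⟩
    · rcases Finset.mem_insert.1 he with rfl | he
      · exact hf
      · exact P.sub γ he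
    · exact P.sub i he
  mtch := by
    intro i
    by_cases h : i = γ
    · rw [h, updC_same]
      constructor
      · intro x hx
        rcases Finset.mem_insert.1 hx with rfl | hx
        · exact SimpleGraph.not_isDiag_of_mem_edgeFinset hf
        · exact (P.mtch γ).1 x hx
      · intro x hx y hy hne v hv
        rcases Finset.mem_insert.1 hx with hx0 | hx0 <;>
          rcases Finset.mem_insert.1 hy with hy0 | hy0
        · exact hne (hx0.trans hy0.symm)
        · exact hfree v (hx0 ▸ hv.1) y hy0 hv.2
        · exact hfree v (hy0 ▸ hv.2) x hx0 hv.1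
        · exact (P.mtch γ).2 x hx0 y hy0 hne v hv
    · rw [updC_other _ _ _ h]
      exact P.mtch i
  hemp := by
    intro i hi
    rw [updC_other _ _ _ (by omega), P.hemp i hi]
  disj := by
    intro i j hij
    rw [Finset.disjoint_left]
    intro x hx hx'
    have hnf : ∀ δ, f ∉ P.C δ := fun δ hmem => hfE (P.mem_of_mem_C hmem)
    have hx1 : x ∈ P.C i ∨ (i = γ ∧ x = f) := by
      rcases mem_updC.1 hx with ⟨h, hxx⟩ | ⟨h, hxx⟩
      · rcases Finset.mem_insert.1 hxx with rfl | hxx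
        · exact Or.inr ⟨h, rfl⟩
        · exact Or.inl (h ▸ hxx)
      · exact Or.inl hxx
    have hx2 : x ∈ P.C j ∨ (j = γ ∧ x = f) := by
      rcases mem_updC.1 hx' with ⟨h, hxx⟩ | ⟨h, hxx⟩
      · rcases Finset.mem_insert.1 hxx with rfl | hxx
        · exact Or.inr ⟨h, rfl⟩
        · exact Or.inl (h ▸ hxx)
      · exact Or.inl hxx
    rcases hx1 with h1 | ⟨hi1, rfl⟩
    · rcases hx2 with h2 | ⟨hj1, rfl⟩
      · exact Finset.disjoint_left.1 (P.disj i j hij) h1 h2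
      · exact hnf i h1
    · rcases hx2 with h2 | ⟨hj1, hf2⟩
      · exact hnf j h2
      · exact hij (hi1.trans hj1.symm)
  cover := by
    intro x
    constructor
    · intro hx
      rcases Finset.mem_insert.1 hx with rfl | hx
      · exact ⟨γ, by rw [updC_same]; exact Finset.mem_insert_self _ _⟩
      · obtain ⟨i, hi⟩ := (P.cover x).1 hx
        refine ⟨i, mem_updC.2 ?_⟩
        by_cases h : i = γ
        · exact Or.inl ⟨h, Finset.mem_insert_of_mem (h ▸ hi)⟩
        · exact Or.inr ⟨h, hi⟩
    · rintro ⟨i, hi⟩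
      rcases mem_updC.1 hi with ⟨h, hx⟩ | ⟨h, hx⟩
      · rcases Finset.mem_insert.1 hx with rfl | hx
        · exact Finset.mem_insert_self _ _
        · exact Finset.mem_insert_of_mem (P.mem_of_mem_C hx)
      · exact Finset.mem_insert_of_mem (P.mem_of_mem_C hx)

lemma PC.insertEdge_C (P : PC G k E₀) (γ : ℕ) (f : Sym2 V) (hγ : γ < k) (hf : f ∈ G.edgeFinset)
    (hfE : f ∉ E₀) (hfree : ∀ v ∈ f, P.free γ v) :
    (P.insertEdge γ f hγ hf hfE hfree).C = updC P.C γ (insert f (P.C γ)) := rfl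

/-- Move the colour of edge `e` (in class `γ`) to the new edge `f`. -/
noncomputable def PC.move (P : PC G k E₀) (γ : ℕ) (e f : Sym2 V)
    (hγ : γ < k) (he : e ∈ P.C γ) (hf : f ∈ G.edgeFinset) (hfE : f ∉ E₀)
    (hfree : ∀ v ∈ f, ∀ e' ∈ (P.C γ).erase e, v ∉ e') :
    PC G k (insert f (E₀.erase e)) where
  C := updC P.C γ (insert f ((P.C γ).erase e))
  sub := by
    intro i x hx
    rcases mem_updC.1 hx with ⟨h, hxx⟩ | ⟨h, hxx⟩
    · rcases Finset.mem_insert.1 hxx with rfl | hxx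
      · exact hf
      · exact P.sub γ (Finset.mem_of_mem_erase hxx)
    · exact P.sub i hxx
  mtch := by
    intro i
    by_cases h : i = γ
    · rw [h, updC_same]
      constructor
      · intro x hx
        rcases Finset.mem_insert.1 hx with rfl | hx
        · exact SimpleGraph.not_isDiag_of_mem_edgeFinset hf
        · exact (P.mtch γ).1 x (Finset.mem_of_mem_erase hx)
      · intro x hx y hy hne v hv
        rcases Finset.mem_insert.1 hx with hx0 | hx0 <;>
          rcases Finset.mem_insert.1 hy with hy0 | hy0
        · exact hne (hx0.trans hy0.symm)
        · exact hfree v (hx0 ▸ hv.1) y hy0 hv.2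
        · exact hfree v (hy0 ▸ hv.2) x hx0 hv.1
        · exact (P.mtch γ).2 x (Finset.mem_of_mem_erase hx0) y (Finset.mem_of_mem_erase hy0)
            hne v hv
    · rw [updC_other _ _ _ h]
      exact P.mtch i
  hemp := by
    intro i hi
    rw [updC_other _ _ _ (by omega), P.hemp i hi]
  disj := by
    intro i j hij
    rw [Finset.disjoint_left]
    intro x hx hx'
    have hnf : ∀ δ, f ∉ P.C δ := fun δ hmem => hfE (P.mem_of_mem_C hmem)
    have hx1 : x ∈ P.C i ∨ (i = γ ∧ x = f) := by
      rcases mem_updC.1 hx with ⟨h, hxx⟩ | ⟨h, hxx⟩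
      · rcases Finset.mem_insert.1 hxx with rfl | hxx
        · exact Or.inr ⟨h, rfl⟩
        · exact Or.inl (h ▸ Finset.mem_of_mem_erase hxx)
      · exact Or.inl hxx
    have hx2 : x ∈ P.C j ∨ (j = γ ∧ x = f) := by
      rcases mem_updC.1 hx' with ⟨h, hxx⟩ | ⟨h, hxx⟩
      · rcases Finset.mem_insert.1 hxx with rfl | hxx
        · exact Or.inr ⟨h, rfl⟩
        · exact Or.inl (h ▸ Finset.mem_of_mem_erase hxx)
      · exact Or.inl hxx
    rcases hx1 with h1 | ⟨hi1, rfl⟩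
    · rcases hx2 with h2 | ⟨hj1, rfl⟩
      · exact Finset.disjoint_left.1 (P.disj i j hij) h1 h2
      · exact hnf i h1
    · rcases hx2 with h2 | ⟨hj1, hf2⟩
      · exact hnf j h2
      · exact hij (hi1.trans hj1.symm)
  cover := by
    intro x
    constructor
    · intro hx
      rcases Finset.mem_insert.1 hx with rfl | hx
      · exact ⟨γ, by rw [updC_same]; exact Finset.mem_insert_self _ _⟩
      · obtain ⟨hxe, hxE⟩ := Finset.mem_erase.1 hx
        obtain ⟨i, hi⟩ := (P.cover x).1 hxE
        refine ⟨i, mem_updC.2 ?_⟩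
        by_cases h : i = γ
        · exact Or.inl ⟨h, Finset.mem_insert_of_mem (Finset.mem_erase.2 ⟨hxe, h ▸ hi⟩)⟩
        · exact Or.inr ⟨h, hi⟩
    · rintro ⟨i, hi⟩
      rcases mem_updC.1 hi with ⟨h, hx⟩ | ⟨h, hx⟩
      · rcases Finset.mem_insert.1 hx with rfl | hx
        · exact Finset.mem_insert_self _ _
        · obtain ⟨hxe, hxC⟩ := Finset.mem_erase.1 hx
          exact Finset.mem_insert_of_mem (Finset.mem_erase.2 ⟨hxe, P.mem_of_mem_C hxC⟩)
      · have hxe : x ≠ e := by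
          rintro rfl
          exact h (P.unique_class hx he)
        exact Finset.mem_insert_of_mem (Finset.mem_erase.2 ⟨hxe, P.mem_of_mem_C hx⟩)

lemma PC.move_C (P : PC G k E₀) (γ : ℕ) (e f : Sym2 V) (hγ : γ < k) (he : e ∈ P.C γ)
    (hf : f ∈ G.edgeFinset) (hfE : f ∉ E₀)
    (hfree : ∀ v ∈ f, ∀ e' ∈ (P.C γ).erase e, v ∉ e') :
    (P.move γ e f hγ he hf hfE hfree).C = updC P.C γ (insert f ((P.C γ).erase e)) := rfl

/-- Kempe swap of the colours `α`, `β` on the component `κ`. -/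
noncomputable def PC.kempe (P : PC G k E₀) (α β : ℕ) (hα : α < k) (hβ : β < k) (hαβ : α ≠ β)
    (κ : (UG (P.C α) (P.C β)).ConnectedComponent) : PC G k E₀ where
  C := updC (updC P.C β (sw (P.C α) (P.C β) (P.C β) (P.C α) κ)) α
      (sw (P.C α) (P.C β) (P.C α) (P.C β) κ)
  sub := by
    intro i x hx
    rcases mem_updC.1 hx with ⟨h, hxx⟩ | ⟨h, hxx⟩
    · rcases Finset.mem_union.1
        (sw_subset Finset.subset_union_left Finset.subset_union_right hxx) with h2 | h2
      · exact P.sub α h2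
      · exact P.sub β h2
    · rcases mem_updC.1 hxx with ⟨h', hyy⟩ | ⟨h', hyy⟩
      · rcases Finset.mem_union.1
          (sw_subset Finset.subset_union_right Finset.subset_union_left hyy) with h2 | h2
        · exact P.sub α h2
        · exact P.sub β h2
      · exact P.sub i hyy
  mtch := by
    intro i
    by_cases h : i = α
    · rw [h, updC_same]
      exact sw_matching (P.mtch α) (P.mtch β) Finset.subset_union_left Finset.subset_union_right
    · rw [updC_other _ _ _ h]
      by_cases h' : i = β
      · rw [h', updC_same]
        exact sw_matching (P.mtch β) (P.mtch α) Finset.subset_union_right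
          Finset.subset_union_left
      · rw [updC_other _ _ _ h']
        exact P.mtch i
  hemp := by
    intro i hi
    rw [updC_other _ _ _ (by omega), updC_other _ _ _ (by omega), P.hemp i hi]
  disj := by
    intro i j hij
    rw [Finset.disjoint_left]
    intro x hx hx'
    have hchar : ∀ δ (hx : x ∈ updC (updC P.C β (sw (P.C α) (P.C β) (P.C β) (P.C α) κ)) α
        (sw (P.C α) (P.C β) (P.C α) (P.C β) κ) δ), x ∈ P.C α ∪ P.C β ∨
          (δ ≠ α ∧ δ ≠ β ∧ x ∈ P.C δ) := by
      intro δ hδ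
      rcases mem_updC.1 hδ with ⟨h, hxx⟩ | ⟨h, hxx⟩
      · exact Or.inl (sw_subset Finset.subset_union_left Finset.subset_union_right hxx)
      · rcases mem_updC.1 hxx with ⟨h', hyy⟩ | ⟨h', hyy⟩
        · exact Or.inl (by
            have := sw_subset (A := P.C α) (B := P.C β) Finset.subset_union_right
              Finset.subset_union_left hyy
            exact this)
        · exact Or.inr ⟨h, h', hyy⟩
    -- main case analysis
    rcases mem_updC.1 hx with ⟨hiα, hxx⟩ | ⟨hiα, hxx⟩
    · -- i = α, x ∈ swA
      rcases mem_updC.1 hx' with ⟨hjα, hyy⟩ | ⟨hjα, hyy⟩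
      · exact hij (hiα.trans hjα.symm)
      · rcases mem_updC.1 hyy with ⟨hjβ, hzz⟩ | ⟨hjβ, hzz⟩
        · exact Finset.disjoint_left.1 (sw_disj (P.disj α β hαβ)) hxx hzz
        · -- x ∈ swA ⊆ Cα ∪ Cβ, and x ∈ C j with j ≠ α, β
          rcases Finset.mem_union.1
            (sw_subset Finset.subset_union_left Finset.subset_union_right hxx) with h2 | h2
          · exact Finset.disjoint_left.1 (P.disj α j (by rw [← hiα]; exact hij)) h2 hzz
          · exact Finset.disjoint_left.1 (P.disj β j (Ne.symm hjβ)) h2 hzz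
    · rcases mem_updC.1 hxx with ⟨hiβ, hzz⟩ | ⟨hiβ, hzz⟩
      · -- i = β, x ∈ swB
        rcases mem_updC.1 hx' with ⟨hjα, hyy⟩ | ⟨hjα, hyy⟩
        · exact Finset.disjoint_left.1 (sw_disj (P.disj α β hαβ)) hyy hzz
        · rcases mem_updC.1 hyy with ⟨hjβ, hww⟩ | ⟨hjβ, hww⟩
          · exact hij (hiβ.trans hjβ.symm)
          · rcases Finset.mem_union.1
              (sw_subset (A := P.C α) (B := P.C β) Finset.subset_union_right
                Finset.subset_union_left hzz) with h2 | h2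
            · exact Finset.disjoint_left.1 (P.disj α j (Ne.symm hjα)) h2 hww
            · exact Finset.disjoint_left.1 (P.disj β j (by rw [← hiβ]; exact hij)) h2 hww
      · -- i ∉ {α, β}, x ∈ C i
        rcases hchar j hx' with h2 | ⟨hjα, hjβ, h2⟩
        · rcases Finset.mem_union.1 h2 with h3 | h3
          · exact Finset.disjoint_left.1 (P.disj i α hiα) hzz h3
          · exact Finset.disjoint_left.1 (P.disj i β hiβ) hzz h3
        · exact Finset.disjoint_left.1 (P.disj i j hij) hzz h2
  cover := by
    intro x
    rw [P.cover x]
    constructor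
    · rintro ⟨i, hi⟩
      by_cases hiα : i = α
      · -- x ∈ C α ⊆ swA ∪ swB
        have hx : x ∈ sw (P.C α) (P.C β) (P.C α) (P.C β) κ ∪
            sw (P.C α) (P.C β) (P.C β) (P.C α) κ := by
          rw [sw_union_eq]
          exact Finset.mem_union_left _ (hiα ▸ hi)
        rcases Finset.mem_union.1 hx with h | h
        · exact ⟨α, by rw [updC_same]; exact h⟩
        · refine ⟨β, ?_⟩
          rw [updC_other _ _ _ (Ne.symm hαβ), updC_same]
          exact h
      · by_cases hiβ : i = β
        · have hx : x ∈ sw (P.C α) (P.C β) (P.C α) (P.C β) κ ∪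
              sw (P.C α) (P.C β) (P.C β) (P.C α) κ := by
            rw [sw_union_eq]
            exact Finset.mem_union_right _ (hiβ ▸ hi)
          rcases Finset.mem_union.1 hx with h | h
          · exact ⟨α, by rw [updC_same]; exact h⟩
          · refine ⟨β, ?_⟩
            rw [updC_other _ _ _ (Ne.symm hαβ), updC_same]
            exact h
        · exact ⟨i, by rw [updC_other _ _ _ hiα, updC_other _ _ _ hiβ]; exact hi⟩
    · rintro ⟨i, hi⟩
      rcases mem_updC.1 hi with ⟨h, hxx⟩ | ⟨h, hxx⟩
      · rcases Finset.mem_union.1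
          (sw_subset Finset.subset_union_left Finset.subset_union_right hxx) with h2 | h2
        · exact ⟨α, h2⟩
        · exact ⟨β, h2⟩
      · rcases mem_updC.1 hxx with ⟨h', hyy⟩ | ⟨h', hyy⟩
        · rcases Finset.mem_union.1
            (sw_subset (A := P.C α) (B := P.C β) Finset.subset_union_right
              Finset.subset_union_left hyy) with h2 | h2
          · exact ⟨α, h2⟩
          · exact ⟨β, h2⟩
        · exact ⟨i, hyy⟩

lemma PC.kempe_C (P : PC G k E₀) (α β : ℕ) (hα : α < k) (hβ : β < k) (hαβ : α ≠ β)
    (κ : (UG (P.C α) (P.C β)).ConnectedComponent) :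
    (P.kempe α β hα hβ hαβ κ).C = updC (updC P.C β (sw (P.C α) (P.C β) (P.C β) (P.C α) κ)) α
      (sw (P.C α) (P.C β) (P.C α) (P.C β) κ) := rfl

lemma PC.kempe_C_alpha (P : PC G k E₀) (α β : ℕ) (hα : α < k) (hβ : β < k) (hαβ : α ≠ β)
    (κ : (UG (P.C α) (P.C β)).ConnectedComponent) :
    (P.kempe α β hα hβ hαβ κ).C α = sw (P.C α) (P.C β) (P.C α) (P.C β) κ := by
  rw [PC.kempe_C, updC_same]

lemma PC.kempe_C_beta (P : PC G k E₀) (α β : ℕ) (hα : α < k) (hβ : β < k) (hαβ : α ≠ β)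
    (κ : (UG (P.C α) (P.C β)).ConnectedComponent) :
    (P.kempe α β hα hβ hαβ κ).C β = sw (P.C α) (P.C β) (P.C β) (P.C α) κ := by
  rw [PC.kempe_C, updC_other _ _ _ (Ne.symm hαβ), updC_same]

lemma PC.kempe_C_other (P : PC G k E₀) (α β : ℕ) (hα : α < k) (hβ : β < k) (hαβ : α ≠ β)
    (κ : (UG (P.C α) (P.C β)).ConnectedComponent) {δ : ℕ} (h1 : δ ≠ α) (h2 : δ ≠ β) :
    (P.kempe α β hα hβ hαβ κ).C δ = P.C δ := by
  rw [PC.kempe_C, updC_other _ _ _ h1, updC_other _ _ _ h2]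


/-- Transport a partial colouring along an equality of edge sets. -/
def PC.copy (P : PC G k E₀) (E₁ : Finset (Sym2 V)) (h : E₀ = E₁) : PC G k E₁ where
  C := P.C
  sub := P.sub
  mtch := P.mtch
  hemp := P.hemp
  disj := P.disj
  cover := h ▸ P.cover

lemma PC.copy_C (P : PC G k E₀) (E₁ : Finset (Sym2 V)) (h : E₀ = E₁) :
    (P.copy E₁ h).C = P.C := rfl

inductive IsFan (P : PC G k E₀) (x y₀ : V) : List V → Prop
  | nil : IsFan P x y₀ []
  | cons (y : V) (ys : List V) (γ : ℕ) (hfan : IsFan P x y₀ ys) (hγ : γ < k)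
      (hcol : s(x,y) ∈ P.C γ) (hfree : ∀ e ∈ P.C γ, (ys.headD y₀) ∉ e)
      (hnotin : y ∉ ys) (hny₀ : y ≠ y₀) : IsFan P x y₀ (y :: ys)

lemma IsFan.head_edge {P : PC G k E₀} {x y₀ : V} {ys : List V} (h : IsFan P x y₀ ys) :
    ys = [] ∨ ∃ δ, δ < k ∧ s(x, ys.headD y₀) ∈ P.C δ := by
  cases h with
  | nil => exact Or.inl rfl
  | cons y ys γ hfan hγ hcol hfree hnotin hny₀ => exact Or.inr ⟨γ, hγ, hcol⟩

lemma IsFan.mem_colored {P : PC G k E₀} {x y₀ : V} {ys : List V} (h : IsFan P x y₀ ys)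
    {z : V} (hz : z ∈ ys) : ∃ δ, δ < k ∧ s(x, z) ∈ P.C δ := by
  induction h with
  | nil => simp at hz
  | cons y ys γ hfan hγ hcol hfree hnotin hny₀ ih =>
    rcases List.mem_cons.1 hz with rfl | hz
    · exact ⟨γ, hγ, hcol⟩
    · exact ih hz

lemma IsFan.not_base_mem {P : PC G k E₀} {x y₀ : V} {ys : List V} (h : IsFan P x y₀ ys) :
    y₀ ∉ ys := by
  induction h with
  | nil => simp
  | cons y ys γ hfan hγ hcol hfree hnotin hny₀ ih =>
    simp only [List.mem_cons, not_or]
    exact ⟨Ne.symm hny₀, ih⟩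

lemma rotate {P : PC G k E₀} {x y₀ : V} (hbase : s(x,y₀) ∈ G.edgeFinset) (hbE : s(x,y₀) ∉ E₀) :
    ∀ ys : List V, IsFan P x y₀ ys →
    ∃ P' : PC G k ((insert (s(x,y₀)) E₀).erase (s(x, ys.headD y₀))),
      (∀ γ, (∃ e ∈ P'.C γ, x ∈ e) ↔ (∃ e ∈ P.C γ, x ∈ e)) ∧
      (∀ γ, (∀ z ∈ ys, s(x,z) ∉ P.C γ) → P'.C γ = P.C γ) ∧
      (∀ (z : V) (l1 l2 : List V) (δ : ℕ), ys = l1 ++ z :: l2 → s(x,z) ∈ P.C δ →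
        P'.C δ = insert (s(x, l2.headD y₀)) ((P.C δ).erase (s(x,z)))) := by
  intro ys hfan
  induction hfan with
  | nil =>
    refine ⟨P.copy ((insert (s(x,y₀)) E₀).erase (s(x, y₀))) (Finset.erase_insert hbE).symm, ?_, ?_, ?_⟩
    · intro γ; rw [PC.copy_C]
    · intro γ _; rw [PC.copy_C]
    · intro z l1 l2 δ habs
      exact absurd habs (by cases l1 <;> simp)
  | cons y t γ hfant hγ hcol hfree hnotin hny₀ ih =>
    obtain ⟨P₁, S1, S2, S3⟩ := ih
    -- P₁ colours (insert b E₀).erase f where f = s(x, t.headD y₀)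
    have hxy : x ≠ y := by
      intro hxy
      apply (P.mtch γ).1 _ hcol
      rw [← hxy]
      exact Sym2.mk_isDiag_iff.2 rfl
    have hclass : ∀ z ∈ t, s(x,z) ∉ P.C γ := by
      intro z hz hmem
      have heq : s(x,y) = s(x,z) := matching_unique (P.mtch γ) hcol hmem
        (Sym2.mem_mk_left x y) (Sym2.mem_mk_left x z)
      rw [Sym2.congr_right] at heq
      exact hnotin (heq ▸ hz)
    have hP₁γ : P₁.C γ = P.C γ := S2 γ hclass
    have heP₁ : s(x,y) ∈ P₁.C γ := by rw [hP₁γ]; exact hcol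
    have hfG : s(x, t.headD y₀) ∈ G.edgeFinset := by
      rcases hfant.head_edge (x := x) with ht | ⟨δ, hδ, hmem⟩
      · rw [ht]
        exact hbase
      · exact P.sub δ hmem
    have hfIn : s(x, t.headD y₀) ∈ insert (s(x,y₀)) E₀ := by
      rcases hfant.head_edge (x := x) with ht | ⟨δ, hδ, hmem⟩
      · rw [ht]
        exact Finset.mem_insert_self _ _
      · exact Finset.mem_insert_of_mem (P.mem_of_mem_C hmem)
    have hfe : s(x, t.headD y₀) ≠ s(x,y) := by
      rw [Ne, Sym2.congr_right]
      cases t with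
      | nil =>
        simp only [List.headD_nil]
        exact fun hc => hny₀ hc.symm
      | cons w t' =>
        simp only [List.headD_cons]
        intro hc
        exact hnotin (hc ▸ (List.mem_cons_self (a := w) (l := t')))
    have hfEr : s(x, t.headD y₀) ∉ (insert (s(x,y₀)) E₀).erase (s(x, t.headD y₀)) :=
      Finset.notMem_erase _ _
    have hmovefree : ∀ v ∈ s(x, t.headD y₀), ∀ e' ∈ (P₁.C γ).erase (s(x,y)), v ∉ e' := by
      intro v hv e' he' hve'
      obtain ⟨hne', hmem'⟩ := Finset.mem_erase.1 he'
      rw [hP₁γ] at hmem'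
      rcases Sym2.mem_iff.1 hv with h | h
      · subst h
        exact hne' (matching_unique (P.mtch γ) hmem' hcol hve' (Sym2.mem_mk_left v y))
      · subst h
        exact hfree e' hmem' hve'
    set P₂ := P₁.move γ (s(x,y)) (s(x, t.headD y₀)) hγ heP₁ hfG hfEr hmovefree with hP₂
    have hset : insert (s(x, t.headD y₀))
        (((insert (s(x,y₀)) E₀).erase (s(x, t.headD y₀))).erase (s(x,y))) =
        (insert (s(x,y₀)) E₀).erase (s(x,y)) := by
      rw [Finset.erase_right_comm]
      exact Finset.insert_erase (Finset.mem_erase.2 ⟨hfe, hfIn⟩)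
    refine ⟨P₂.copy ((insert (s(x,y₀)) E₀).erase (s(x,y))) hset, ?_, ?_, ?_⟩
    · -- S1
      intro δ
      rw [PC.copy_C, hP₂, PC.move_C]
      by_cases hδ : δ = γ
      · subst hδ
        rw [updC_same]
        constructor
        · intro _
          exact ⟨s(x,y), hcol, Sym2.mem_mk_left x y⟩
        · intro _
          exact ⟨s(x, t.headD y₀), Finset.mem_insert_self _ _, Sym2.mem_mk_left _ _⟩
      · rw [updC_other _ _ _ hδ]
        exact S1 δ
    · -- S2
      intro δ hδ
      have hδγ : δ ≠ γ := by
        intro hc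
        exact hδ y ((List.mem_cons_self (a := y) (l := t))) (hc ▸ hcol)
      rw [PC.copy_C, hP₂, PC.move_C, updC_other _ _ _ hδγ]
      exact S2 δ (fun z hz => hδ z (List.mem_cons_of_mem y hz))
    · -- S3
      intro z l1 l2 δ hsplit hzmem
      cases l1 with
      | nil =>
        simp only [List.nil_append, List.cons.injEq] at hsplit
        obtain ⟨rfl, rfl⟩ := hsplit
        have hδγ : δ = γ := P.unique_class hzmem hcol
        subst hδγ
        rw [PC.copy_C, hP₂, PC.move_C, updC_same, hP₁γ]
      | cons w l1' =>
        simp only [List.cons_append, List.cons.injEq] at hsplit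
        obtain ⟨rfl, hsplit⟩ := hsplit
        have hzt : z ∈ t := by
          rw [hsplit]
          exact List.mem_append_right _ ((List.mem_cons_self (a := z) (l := l2)))
        have hδγ : δ ≠ γ := by
          intro hc
          exact hclass z hzt (hc ▸ hzmem)
        rw [PC.copy_C, hP₂, PC.move_C, updC_other _ _ _ hδγ]
        exact S3 z l1' l2 δ hsplit hzmem

lemma IsFan.nodup {P : PC G k E₀} {x y₀ : V} {ys : List V} (h : IsFan P x y₀ ys) :
    ys.Nodup := by
  induction h with
  | nil => exact List.nodup_nil
  | cons y ys γ hfan hγ hcol hfree hnotin hny₀ ih => exact List.nodup_cons.2 ⟨hnotin, ih⟩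

lemma IsFan.suffix {P : PC G k E₀} {x y₀ : V} :
    ∀ (l1 l2 : List V), IsFan P x y₀ (l1 ++ l2) → IsFan P x y₀ l2 := by
  intro l1
  induction l1 with
  | nil => exact fun l2 h => h
  | cons a l1' ih =>
    intro l2 h
    cases h with
    | cons _ _ γ hfan hγ hcol hfree hnotin hny₀ => exact ih l2 hfan

lemma head_ne_inner {ys : List V} {y₀ : V} (hnd : ys.Nodup) (hy₀ : y₀ ∉ ys)
    {l1 l2 : List V} {z : V} (hsplit : ys = l1 ++ z :: l2) :
    ys.headD y₀ ≠ l2.headD y₀ := by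
  subst hsplit
  cases l1 with
  | nil =>
    simp only [List.nil_append, List.headD_cons]
    cases l2 with
    | nil =>
      simp only [List.headD_nil]
      intro hc
      exact hy₀ (hc ▸ (List.mem_cons_self (a := z) (l := [])))
    | cons u l2' =>
      simp only [List.headD_cons]
      intro hc
      rw [List.nil_append, List.nodup_cons] at hnd
      exact hnd.1 (hc ▸ (List.mem_cons_self (a := u) (l := l2')))
  | cons a l1' =>
    simp only [List.cons_append, List.headD_cons]
    cases l2 with
    | nil =>
      simp only [List.headD_nil]
      intro hc
      exact hy₀ (hc ▸ (List.mem_cons_self (a := a) (l := _)))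
    | cons u l2' =>
      simp only [List.headD_cons]
      intro hc
      rw [List.cons_append, List.nodup_cons] at hnd
      apply hnd.1
      rw [hc]
      exact List.mem_append_right _ (List.mem_cons_of_mem z ((List.mem_cons_self (a := u) (l := l2'))))

lemma reachable_closed {G' : SimpleGraph V} {S : Set V}
    (hS : ∀ u v, u ∈ S → G'.Adj u v → v ∈ S) :
    ∀ {a b : V}, a ∈ S → G'.Reachable a b → b ∈ S := by
  suffices H : ∀ a b : V, ∀ _p : G'.Walk a b, a ∈ S → b ∈ S by
    intro a b ha h
    obtain ⟨p⟩ := h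
    exact H a b p ha
  intro a b p
  induction p with
  | nil => exact fun h => h
  | @cons u v w h' p ih => exact fun ha => ih (hS u v ha h')

lemma deg_le_one_left {A B : Finset (Sym2 V)} {v : V} (hB : IsMatchingEdgeSet B)
    (hfreeA : ∀ e ∈ A, v ∉ e) : ((A ∪ B).filter (fun e => v ∈ e)).card ≤ 1 := by
  classical
  have hsub : (A ∪ B).filter (fun e => v ∈ e) ⊆ B.filter (fun e => v ∈ e) := by
    intro e he
    simp only [Finset.mem_filter, Finset.mem_union] at he ⊢
    rcases he.1 with h | h
    · exact absurd he.2 (hfreeA e h)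
    · exact ⟨h, he.2⟩
  exact le_trans (Finset.card_le_card hsub) (matching_filter_card hB v)

lemma deg_le_one_right {A B : Finset (Sym2 V)} {v : V} (hA : IsMatchingEdgeSet A)
    (hfreeB : ∀ e ∈ B, v ∉ e) : ((A ∪ B).filter (fun e => v ∈ e)).card ≤ 1 := by
  classical
  have hsub : (A ∪ B).filter (fun e => v ∈ e) ⊆ A.filter (fun e => v ∈ e) := by
    intro e he
    simp only [Finset.mem_filter, Finset.mem_union] at he ⊢
    rcases he.1 with h | h
    · exact ⟨h, he.2⟩
    · exact absurd he.2 (hfreeB e h)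
  exact le_trans (Finset.card_le_card hsub) (matching_filter_card hA v)

lemma ne_of_edge {G : SimpleGraph V} [DecidableRel G.Adj] {x w : V}
    (h : s(x,w) ∈ G.edgeFinset) : x ≠ w := by
  intro hc
  apply SimpleGraph.not_isDiag_of_mem_edgeFinset h
  rw [hc]
  exact Sym2.mk_isDiag_iff.2 rfl

lemma extend (hk : 1 ≤ k) (hdeg : ∀ v, G.degree v ≤ k - 1)
    (P : PC G k E₀) {x y₀ : V} (hbase : s(x,y₀) ∈ G.edgeFinset) (hbE : s(x,y₀) ∉ E₀) :
    Nonempty (PC G k (insert (s(x,y₀)) E₀)) := by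
  classical
  suffices H : ∀ n (ys : List V), IsFan P x y₀ ys → Fintype.card V ≤ ys.length + n →
      Nonempty (PC G k (insert (s(x,y₀)) E₀)) by
    exact H (Fintype.card V) [] IsFan.nil (by omega)
  intro n
  induction n with
  | zero =>
    intro ys hfan hlen
    exfalso
    have hnd : (y₀ :: ys).Nodup := List.nodup_cons.2 ⟨hfan.not_base_mem, hfan.nodup⟩
    have hcard := List.Nodup.length_le_card hnd
    simp only [List.length_cons] at hcard
    omega
  | succ n ih =>
    intro ys hfan hlen
    have hwG : s(x, ys.headD y₀) ∈ G.edgeFinset := by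
      rcases hfan.head_edge (x := x) with h | ⟨δ, hδ, hmem⟩
      · rw [h]; exact hbase
      · exact P.sub δ hmem
    have hwIn : s(x, ys.headD y₀) ∈ insert (s(x,y₀)) E₀ := by
      rcases hfan.head_edge (x := x) with h | ⟨δ, hδ, hmem⟩
      · rw [h]; exact Finset.mem_insert_self _ _
      · exact Finset.mem_insert_of_mem (P.mem_of_mem_C hmem)
    have hxw : x ≠ ys.headD y₀ := ne_of_edge hwG
    obtain ⟨β, hβk, hβfree⟩ := P.free_exists hk (ys.headD y₀) (hdeg _)
    obtain ⟨α, hαk, hαfree⟩ := P.free_exists hk x (hdeg x)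
    have hfanα : ∀ u ∈ ys, s(x,u) ∉ P.C α :=
      fun u hu hmem => hαfree _ hmem (Sym2.mem_mk_left _ _)
    by_cases hβx : P.free β x
    · -- T1 : rotate fully and colour the tip edge with β
      obtain ⟨P₁, S1, S2, S3⟩ := rotate hbase hbE ys hfan
      have tip_free : ∀ δ, (∀ e ∈ P.C δ, ys.headD y₀ ∉ e) → ∀ e ∈ P₁.C δ, ys.headD y₀ ∉ e := by
        intro δ hδfree
        by_cases hall : ∀ u ∈ ys, s(x,u) ∉ P.C δ
        · rw [S2 δ hall]; exact hδfree
        · push_neg at hall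
          obtain ⟨z, hz, hzmem⟩ := hall
          obtain ⟨l1, l2, hsplit⟩ := List.append_of_mem hz
          rw [S3 z l1 l2 δ hsplit hzmem]
          intro e he hwe
          rcases Finset.mem_insert.1 he with rfl | he'
          · rcases Sym2.mem_iff.1 hwe with h | h
            · exact hxw h.symm
            · exact head_ne_inner hfan.nodup hfan.not_base_mem hsplit h
          · exact hδfree e (Finset.mem_of_mem_erase he') hwe
      have hfreeX : ∀ e ∈ P₁.C β, x ∉ e := by
        intro e he hx
        obtain ⟨e', he', hx'⟩ := (S1 β).1 ⟨e, he, hx⟩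
        exact hβx e' he' hx'
      refine ⟨(P₁.insertEdge β (s(x, ys.headD y₀)) hβk hwG (Finset.notMem_erase _ _)
        ?_).copy _ (Finset.insert_erase hwIn)⟩
      intro v hv
      rcases Sym2.mem_iff.1 hv with h | h
      · subst h; exact hfreeX
      · subst h; exact tip_free β hβfree
    · -- β appears at x
      have hβx' : ∃ e ∈ P.C β, x ∈ e := by
        by_contra hc
        push_neg at hc
        exact hβx hc
      obtain ⟨e₀, he₀, hxe₀⟩ := hβx'
      obtain ⟨z, rfl⟩ := Sym2.mem_iff_exists.1 hxe₀
      have hxz : x ≠ z := ne_of_edge (P.sub β he₀)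
      have hαβ : α ≠ β := fun hc => hβx (hc ▸ hαfree)
      by_cases hzys : z ∈ ys
      · -- terminal case : Kempe swaps
        obtain ⟨l1, l2, hsplit⟩ := List.append_of_mem hzys
        have hfanzl2 : IsFan P x y₀ (z :: l2) :=
          IsFan.suffix l1 (z :: l2) (by rw [← hsplit]; exact hfan)
        obtain ⟨hfanl2, hfree'⟩ : IsFan P x y₀ l2 ∧ ∀ e ∈ P.C β, l2.headD y₀ ∉ e := by
          cases hfanzl2 with
          | cons _ _ γ hfan' hγ hcol hfree hnotin hny₀ =>
            have hγβ : γ = β := P.unique_class hcol he₀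
            exact ⟨hfan', hγβ ▸ hfree⟩
        have hznl2 : z ∉ l2 := (List.nodup_cons.1 hfanzl2.nodup).1
        have hw'G : s(x, l2.headD y₀) ∈ G.edgeFinset := by
          rcases hfanl2.head_edge (x := x) with h | ⟨δ, hδ, hmem⟩
          · rw [h]; exact hbase
          · exact P.sub δ hmem
        have hw'In : s(x, l2.headD y₀) ∈ insert (s(x,y₀)) E₀ := by
          rcases hfanl2.head_edge (x := x) with h | ⟨δ, hδ, hmem⟩
          · rw [h]; exact Finset.mem_insert_self _ _
          · exact Finset.mem_insert_of_mem (P.mem_of_mem_C hmem)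
        have hxw' : x ≠ l2.headD y₀ := ne_of_edge hw'G
        have hww' : ys.headD y₀ ≠ l2.headD y₀ :=
          head_ne_inner hfan.nodup hfan.not_base_mem hsplit
        obtain ⟨Pf, S1f, S2f, S3f⟩ := rotate hbase hbE ys hfan
        have hPfα : Pf.C α = P.C α := S2f α hfanα
        have hPfβ : Pf.C β = insert (s(x, l2.headD y₀)) ((P.C β).erase (s(x,z))) :=
          S3f z l1 l2 β hsplit he₀
        by_cases hcomp : (UG (Pf.C α) (Pf.C β)).connectedComponentMk x =
            (UG (Pf.C α) (Pf.C β)).connectedComponentMk (ys.headD y₀)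
        · -- the tip is in the same component as x : use the inner vertex instead
          have hUx : (UG (P.C α) (P.C β)).connectedComponentMk x ≠
              (UG (P.C α) (P.C β)).connectedComponentMk (l2.headD y₀) := by
            intro hc
            set S : Set V := {v | (UG (P.C α) (P.C β)).connectedComponentMk v =
              (UG (P.C α) (P.C β)).connectedComponentMk x} with hS
            have hclosed : ∀ u v, u ∈ S → (UG (Pf.C α) (Pf.C β)).Adj u v → v ∈ S := by
              intro u v hu hadj
              rw [UG, SimpleGraph.fromEdgeSet_adj] at hadj
              obtain ⟨hmem, huv⟩ := hadj
              rw [Finset.coe_union, Set.mem_union] at hmem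
              have hstep : s(u,v) ∈ P.C α ∪ P.C β ∨ s(u,v) = s(x, l2.headD y₀) := by
                rcases hmem with h | h
                · rw [hPfα] at h
                  exact Or.inl (Finset.mem_union_left _ (by exact_mod_cast h))
                · rw [hPfβ] at h
                  have h' : s(u,v) ∈ insert (s(x, l2.headD y₀)) ((P.C β).erase (s(x,z))) := by
                    exact_mod_cast h
                  rcases Finset.mem_insert.1 h' with h'' | h''
                  · exact Or.inr h''
                  · exact Or.inl (Finset.mem_union_right _ (Finset.mem_of_mem_erase h''))
              rcases hstep with h | h
              · have hadj' : (UG (P.C α) (P.C β)).Adj u v := adj_UG h huv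
                simp only [hS, Set.mem_setOf_eq] at hu ⊢
                rw [← SimpleGraph.ConnectedComponent.connectedComponentMk_eq_of_adj hadj']
                exact hu
              · rw [Sym2.eq_iff] at h
                simp only [hS, Set.mem_setOf_eq]
                rcases h with ⟨h1, h2⟩ | ⟨h1, h2⟩
                · rw [h2, hc]
                · rw [h2]
            have hreach : (UG (Pf.C α) (Pf.C β)).Reachable x (ys.headD y₀) :=
              SimpleGraph.ConnectedComponent.eq.1 hcomp
            have hwS : ys.headD y₀ ∈ S := reachable_closed hclosed (by
              simp only [hS, Set.mem_setOf_eq]) hreach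
            simp only [hS, Set.mem_setOf_eq] at hwS
            exact three_leaves (P.mtch α) (P.mtch β) hxw hxw' hww' hwS hc.symm
              (deg_le_one_left (P.mtch β) hαfree)
              (deg_le_one_right (P.mtch α) hβfree)
              (deg_le_one_right (P.mtch α) hfree')
          -- rotate only the part of the fan below z
          obtain ⟨P₁, S1p, S2p, S3p⟩ := rotate hbase hbE l2 hfanl2
          have hP₁α : P₁.C α = P.C α := S2p α (fun u hu =>
            hfanα u (by rw [hsplit]; exact List.mem_append_right _ (List.mem_cons_of_mem z hu)))
          have hP₁β : P₁.C β = P.C β := by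
            apply S2p β
            intro u hu hmem
            have heq : s(x,z) = s(x,u) := matching_unique (P.mtch β) he₀ hmem
              (Sym2.mem_mk_left _ _) (Sym2.mem_mk_left _ _)
            rw [Sym2.congr_right] at heq
            exact hznl2 (heq ▸ hu)
          have hcompP₁ : (UG (P₁.C α) (P₁.C β)).connectedComponentMk x ≠
              (UG (P₁.C α) (P₁.C β)).connectedComponentMk (l2.headD y₀) := by
            rw [hP₁α, hP₁β]
            exact hUx
          set κ := (UG (P₁.C α) (P₁.C β)).connectedComponentMk (l2.headD y₀) with hκ
          set P₂ := P₁.kempe α β hαk hβk hαβ κ with hP₂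
          refine ⟨(P₂.insertEdge α (s(x, l2.headD y₀)) hαk hw'G (Finset.notMem_erase _ _)
            ?_).copy _ (Finset.insert_erase hw'In)⟩
          intro v hv e' he' hve'
          rw [hP₂, PC.kempe_C_alpha] at he'
          rcases Sym2.mem_iff.1 hv with h | h
          · subst h
            have := (mem_sw_of_ncomp hcompP₁ Finset.subset_union_left
              Finset.subset_union_right hve').1 he'
            rw [hP₁α] at this
            exact hαfree e' this hve'
          · subst h
            have := (mem_sw_of_comp hκ.symm Finset.subset_union_left
              Finset.subset_union_right hve').1 he'
            rw [hP₁β] at this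
            exact hfree' e' this hve'
        · -- the tip is in a different component : swap its component
          set κ := (UG (Pf.C α) (Pf.C β)).connectedComponentMk (ys.headD y₀) with hκ
          set P₂ := Pf.kempe α β hαk hβk hαβ κ with hP₂
          have hβfw : ∀ e ∈ Pf.C β, ys.headD y₀ ∉ e := by
            intro e he hwe
            rw [hPfβ] at he
            rcases Finset.mem_insert.1 he with rfl | he'
            · rcases Sym2.mem_iff.1 hwe with h | h
              · exact hxw h.symm
              · exact hww' h
            · exact hβfree e (Finset.mem_of_mem_erase he') hwe
          refine ⟨(P₂.insertEdge α (s(x, ys.headD y₀)) hαk hwG (Finset.notMem_erase _ _)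
            ?_).copy _ (Finset.insert_erase hwIn)⟩
          intro v hv e' he' hve'
          rw [hP₂, PC.kempe_C_alpha] at he'
          rcases Sym2.mem_iff.1 hv with h | h
          · subst h
            have := (mem_sw_of_ncomp hcomp Finset.subset_union_left
              Finset.subset_union_right hve').1 he'
            rw [hPfα] at this
            exact hαfree e' this hve'
          · subst h
            have := (mem_sw_of_comp hκ.symm Finset.subset_union_left
              Finset.subset_union_right hve').1 he'
            exact hβfw e' this hve'
      · -- extend the fan
        have hzy₀ : z ≠ y₀ := by
          rintro rfl
          exact hbE (P.mem_of_mem_C he₀)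
        have hfan' : IsFan P x y₀ (z :: ys) :=
          IsFan.cons z ys β hfan hβk he₀ hβfree hzys hzy₀
        apply ih (z :: ys) hfan'
        simp only [List.length_cons]
        omega

end Vizing

section Main

open Classical

lemma vizing (G : SimpleGraph V) [DecidableRel G.Adj] (k : ℕ) (hk : 1 ≤ k)
    (hdeg : ∀ v, G.degree v ≤ k - 1) :
    ∃ D : ℕ → Finset (Sym2 V), (∀ i, IsMatchingEdgeSet (D i)) ∧
      (∀ i j, i ≠ j → Disjoint (D i) (D j)) ∧ (∀ i, k ≤ i → D i = ∅) ∧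
      (Finset.range k).biUnion D = G.edgeFinset := by
  classical
  suffices H : ∀ (N : ℕ) (E₀ : Finset (Sym2 V)), E₀.card ≤ N → E₀ ⊆ G.edgeFinset →
      Nonempty (PC G k E₀) by
    obtain ⟨P⟩ := H G.edgeFinset.card G.edgeFinset le_rfl (subset_refl _)
    refine ⟨P.C, P.mtch, P.disj, P.hemp, ?_⟩
    ext e
    simp only [Finset.mem_biUnion, Finset.mem_range]
    constructor
    · rintro ⟨i, _, hi⟩
      exact (P.cover e).2 ⟨i, hi⟩
    · intro he
      obtain ⟨i, hi⟩ := (P.cover e).1 he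
      refine ⟨i, ?_, hi⟩
      by_contra hik
      push_neg at hik
      rw [P.hemp i hik] at hi
      simp at hi
  intro N
  induction N with
  | zero =>
    intro E₀ hcard _
    have hE : E₀ = ∅ := Finset.card_eq_zero.1 (Nat.le_zero.1 hcard)
    subst hE
    refine ⟨⟨fun _ => ∅, ?_, ?_, ?_, ?_, ?_⟩⟩
    · intro i
      simp
    · intro i
      exact ⟨by simp, by simp⟩
    · intro i _
      rfl
    · intro i j _
      simp
    · intro e
      simp
  | succ N ihN =>
    intro E₀ hcard hsub
    rcases Finset.eq_empty_or_nonempty E₀ with rfl | ⟨e, he⟩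
    · exact ihN ∅ (by simp) (by simp)
    · have heG : e ∈ G.edgeFinset := hsub he
      obtain ⟨P'⟩ := ihN (E₀.erase e) (by
        rw [Finset.card_erase_of_mem he]
        omega) ((Finset.erase_subset _ _).trans hsub)
      have hbase : s(e.out.1, e.out.2) ∈ G.edgeFinset := by
        rw [out_eq]
        exact heG
      have hbE : s(e.out.1, e.out.2) ∉ E₀.erase e := by
        rw [out_eq]
        exact Finset.notMem_erase _ _
      obtain ⟨P⟩ := extend hk hdeg P' hbase hbE
      refine ⟨P.copy E₀ ?_⟩
      rw [out_eq]
      exact Finset.insert_erase he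

end Main

end ASD

theorem asd_into_matchings_of_small_max_degree {V : Type*} [Fintype V] [DecidableEq V]
    (G : SimpleGraph V) [DecidableRel G.Adj] (m : ℕ) (hm : 0 < m)
    (hlb : m.choose 2 < G.edgeFinset.card) (hub : G.edgeFinset.card ≤ (m + 1).choose 2)
    (hdeg : ∀ v, G.degree v ≤ m / 2 - 1) :
    ∃ H : ℕ → Finset (Sym2 V),
      (∀ i ∈ Finset.Icc 1 m, H i ⊆ G.edgeFinset) ∧
      (∀ i ∈ Finset.Icc 1 m, IsMatchingEdgeSet (H i)) ∧
      (∀ i ∈ Finset.Icc 1 m, ∀ j ∈ Finset.Icc 1 m, i ≠ j → Disjoint (H i) (H j)) ∧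
      (Finset.Icc 1 m).biUnion H = G.edgeFinset ∧
      (∀ i ∈ Finset.Icc 1 m,
        (H i).card = if i ≤ G.edgeFinset.card - m.choose 2 then i else i - 1) := by
  classical
  have hchoose : (m+1).choose 2 = m.choose 2 + m := by
    rw [Nat.choose_succ_succ, Nat.choose_one_right, Nat.add_comm]
  have hm4 : 4 ≤ m := by
    by_contra hc
    push_neg at hc
    have hdeg0 : ∀ v, G.degree v = 0 := by
      intro v
      have := hdeg v
      omega
    have hsum0 : ∑ v, G.degree v = 0 := Finset.sum_eq_zero (fun v _ => hdeg0 v)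
    rw [SimpleGraph.sum_degrees_eq_twice_card_edges] at hsum0
    omega
  set t := G.edgeFinset.card - m.choose 2 with htdef
  have hub' : G.edgeFinset.card ≤ m.choose 2 + m := by rw [← hchoose]; exact hub
  have ht1 : 1 ≤ t := by omega
  have ht2 : t ≤ m := by omega
  have het : G.edgeFinset.card = m.choose 2 + t := by omega
  set k := m / 2 with hkdef
  have hk2 : 2 ≤ k := by omega
  obtain ⟨D, hDm, hDd, hDe, hDc⟩ := ASD.vizing G k (by omega) (fun v => hdeg v)
  -- Gauss sum facts
  have hrange : Finset.range (m+1) = insert 0 (Finset.Icc 1 m) := by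
    ext j
    simp only [Finset.mem_range, Finset.mem_insert, Finset.mem_Icc]
    omega
  have hgauss2 : (∑ j ∈ Finset.Icc 1 m, j) * 2 = m * (m + 1) := by
    have h0 : (∑ j ∈ Finset.range (m+1), j) = ∑ j ∈ Finset.Icc 1 m, j := by
      rw [hrange, Finset.sum_insert (by simp), zero_add]
    have := Finset.sum_range_id_mul_two (m+1)
    rw [h0] at this
    have h1 : m + 1 - 1 = m := rfl
    rw [this, h1]
    ring
  have hch2 : (m+1).choose 2 * 2 = m * (m + 1) := by
    rw [Nat.choose_two_right]
    have h : m + 1 - 1 = m := rfl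
    rw [h]
    have heven : Even ((m+1) * m) := by
      rw [Nat.mul_comm]
      exact Nat.even_mul_succ_self m
    rw [Nat.div_mul_cancel heven.two_dvd]
    ring
  have hgauss : (∑ j ∈ Finset.Icc 1 m, j) = (m+1).choose 2 := by omega
  -- sum of the target sizes
  have hindsum : (∑ j ∈ Finset.Icc 1 m, (if j ≤ t then (0:ℕ) else 1)) = m - t := by
    have h1 : (∑ j ∈ Finset.Icc 1 m, (if j ≤ t then (0:ℕ) else 1)) =
        ((Finset.Icc 1 m).filter (fun j => ¬ j ≤ t)).card := by
      rw [Finset.card_filter]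
      apply Finset.sum_congr rfl
      intro j _
      by_cases h : j ≤ t <;> simp [h]
    rw [h1]
    have h2 : (Finset.Icc 1 m).filter (fun j => ¬ j ≤ t) = Finset.Icc (t+1) m := by
      ext j
      simp only [Finset.mem_filter, Finset.mem_Icc, not_le]
      omega
    rw [h2, Nat.card_Icc]
    omega
  have hsum : (∑ j ∈ Finset.Icc 1 m, (if j ≤ t then j else j - 1)) = G.edgeFinset.card := by
    have hkey : (∑ j ∈ Finset.Icc 1 m, (if j ≤ t then j else j - 1)) +
        (∑ j ∈ Finset.Icc 1 m, (if j ≤ t then (0:ℕ) else 1)) = ∑ j ∈ Finset.Icc 1 m, j := by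
      rw [← Finset.sum_add_distrib]
      apply Finset.sum_congr rfl
      intro j hj
      simp only [Finset.mem_Icc] at hj
      split_ifs <;> omega
    rw [hindsum] at hkey
    omega
  obtain ⟨g, hgk, hbal⟩ : ∃ g : ℕ → ℕ, (∀ j ∈ Finset.Icc 1 m, g j < k) ∧
      ∀ c ∈ Finset.range k, ∀ c' ∈ Finset.range k,
      (∑ j ∈ (Finset.Icc 1 m).filter (fun j => g j = c), (if j ≤ t then j else j - 1)) ≤
      (∑ j ∈ (Finset.Icc 1 m).filter (fun j => g j = c'), (if j ≤ t then j else j - 1)) + 1 := by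
    rcases Nat.even_or_odd m with hev | hod
    · have hmk : m = 2 * k := by
        obtain ⟨r, hr⟩ := hev
        omega
      exact ASD.case_even k t m hmk hk2 ht1 ht2
    · have hmk : m = 2 * k + 1 := by
        obtain ⟨r, hr⟩ := hod
        omega
      exact ASD.case_odd k t m hmk hk2 ht1 ht2
  obtain ⟨H, h1, h2, h3, h4, h5⟩ := ASD.assemble G.edgeFinset k m
    (fun j => if j ≤ t then j else j - 1) g hgk D hDm hDd hDe hDc hbal hsum
  exact ⟨H, h1, h2, h3, h4, h5⟩
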